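/- arXiv:2206.02477 — 10 statements merged into one kernel-verified Lean document; each statement's English description precedes it below -/
import Mathlib

section
/- Let n ≥ 1 and let 𝒫₁, …, 𝒫ₙ be nonempty sets of Borel probability measures on [0,∞), each containing only measures with finite mean. Let T be the robust thresholds associated with 𝒫₁, …, 𝒫ₙ. Consider the deterministic threshold stopping rule that, given offer values x₁, …, xₙ ∈ [0,∞), accepts the first offer i ∈ {1,…,n} with xᵢ ≥ T(i) (this rule always accepts some offer, since T(n) = 0). Then for every choice of measures Pᵢ ∈ 𝒫ᵢ (i = 1,…,n), the expected value of the accepted offer under the product measure P₁ ⊗ ⋯ ⊗ Pₙ, i.e. ∫ x_{i*(x)} d(P₁ ⊗ ⋯ ⊗ Pₙ)(x) where i*(x) = min{ i : xᵢ ≥ T(i) }, is at least T(0). -/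
open MeasureTheory

/-- Backward robust thresholds: `robustTAux Ps n k = T(n - k)`, where
`T(n) = 0` and `T(i) = inf_{P ∈ Ps (i+1)} ∫ max (T (i+1)) x dP`. -/
noncomputable def robustTAux (Ps : ℕ → Set (Measure ℝ)) (n : ℕ) : ℕ → ℝ
  | 0 => 0
  | k + 1 => sInf ((fun P => ∫ x, max (robustTAux Ps n k) x ∂P) '' Ps (n - k))

/-- The robust threshold `T(i)` for `0 ≤ i ≤ n`. -/
noncomputable def robustT (Ps : ℕ → Set (Measure ℝ)) (n i : ℕ) : ℝ :=
  robustTAux Ps n (n - i)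

open scoped Classical in
/-- Value of the accepted offer: the first `j : Fin n` (representing offer `j+1`)
with `x j ≥ T (j+1)` is accepted; default value `0` if no offer is accepted. -/
noncomputable def acceptedValue (n : ℕ) (T : ℕ → ℝ) (x : Fin n → ℝ) : ℝ :=
  if h : ∃ j : Fin n, T (j.1 + 1) ≤ x j then x (Fin.find (fun j : Fin n => T (j.1 + 1) ≤ x j) h)
  else 0


open scoped Classical

lemma acceptedValue_zero (S : ℕ → ℝ) (x : Fin 0 → ℝ) : acceptedValue 0 S x = 0 := by
  unfold acceptedValue; simp

lemma acceptedValue_cons (m : ℕ) (S : ℕ → ℝ) (a : ℝ) (y : Fin m → ℝ) :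
    acceptedValue (m + 1) S (Fin.cons a y) =
      if S 1 ≤ a then a else acceptedValue m (fun i => S (i + 1)) y := by
  by_cases h : S 1 ≤ a
  · rw [if_pos h]
    have hex : ∃ j : Fin (m+1), S (j.1 + 1) ≤ (Fin.cons a y : Fin (m+1) → ℝ) j := ⟨0, by simpa using h⟩
    have hf : Fin.find (fun j : Fin (m+1) => S (j.1 + 1) ≤ (Fin.cons a y : Fin (m+1) → ℝ) j) hex = 0 := by
      rw [Fin.find_eq_zero]
      simpa using h
    unfold acceptedValue
    simp only [dif_pos hex, hf, Fin.cons_zero]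
  · rw [if_neg h]
    by_cases hq : ∃ j : Fin m, S (j.1 + 1 + 1) ≤ y j
    · have hex : ∃ j : Fin (m+1), S (j.1 + 1) ≤ (Fin.cons a y : Fin (m+1) → ℝ) j :=
        ⟨(Fin.find _ hq).succ, by simpa using Fin.find_spec hq⟩
      have hf : Fin.find (fun j : Fin (m+1) => S (j.1 + 1) ≤ (Fin.cons a y : Fin (m+1) → ℝ) j) hex
          = (Fin.find _ hq).succ := by
        rw [Fin.find_eq_iff]
        constructor
        · simpa using Fin.find_spec hq
        · intro k hk
          induction k using Fin.cases with
          | zero => simpa using h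
          | succ k' =>
            have := Fin.find_min hq (Fin.succ_lt_succ_iff.mp hk)
            simpa using this
      unfold acceptedValue
      simp only [dif_pos hex, dif_pos hq, hf, Fin.cons_succ]
    · have hex : ¬ ∃ j : Fin (m+1), S (j.1 + 1) ≤ (Fin.cons a y : Fin (m+1) → ℝ) j := by
        rintro ⟨i, hi⟩
        induction i using Fin.cases with
        | zero => exact h (by simpa using hi)
        | succ k => exact hq ⟨k, by simpa using hi⟩
      unfold acceptedValue
      simp only [dif_neg hex, dif_neg hq]

lemma acceptedValue_succ_eq (m : ℕ) (S : ℕ → ℝ) :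
    acceptedValue (m + 1) S = fun x =>
      if S 1 ≤ x 0 then x 0 else acceptedValue m (fun i => S (i + 1)) (Fin.tail x) := by
  funext x
  conv_lhs => rw [← Fin.cons_self_tail x]
  rw [acceptedValue_cons]

lemma acceptedValue_measurable (m : ℕ) (S : ℕ → ℝ) : Measurable (acceptedValue m S) := by
  induction m generalizing S with
  | zero =>
    have : acceptedValue 0 S = fun _ => (0:ℝ) := funext fun x => acceptedValue_zero S x
    rw [this]; exact measurable_const
  | succ m ih =>
    rw [acceptedValue_succ_eq]
    have htail : Measurable (fun x : Fin (m+1) → ℝ => Fin.tail x) :=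
      measurable_pi_iff.2 fun j => measurable_pi_apply _
    exact Measurable.ite (measurableSet_le measurable_const (measurable_pi_apply 0))
      (measurable_pi_apply 0) ((ih _).comp htail)

lemma key (m : ℕ) (S : ℕ → ℝ) (Q : Fin m → Measure ℝ)
    (hprob : ∀ j, IsProbabilityMeasure (Q j))
    (hint : ∀ j, Integrable (fun x : ℝ => x) (Q j))
    (hS : ∀ j : Fin m, S j.1 ≤ ∫ x, max (S (j.1 + 1)) x ∂(Q j))
    (hSm : S m ≤ 0) :
    Integrable (acceptedValue m S) (Measure.pi Q) ∧
      S 0 ≤ ∫ x, acceptedValue m S x ∂(Measure.pi Q) := by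
  induction m generalizing S with
  | zero =>
    have h0 : acceptedValue 0 S = fun _ => (0:ℝ) := funext fun x => acceptedValue_zero S x
    rw [h0]
    refine ⟨integrable_const 0, ?_⟩
    simpa using hSm
  | succ m ih =>
    haveI : ∀ j, IsProbabilityMeasure (Q j) := hprob
    haveI : ∀ j, SigmaFinite (Q j) := fun j => inferInstance
    set S' : ℕ → ℝ := fun i => S (i + 1) with hS'def
    set Q' : Fin m → Measure ℝ := fun j => Q j.succ with hQ'def
    haveI : ∀ j, IsProbabilityMeasure (Q' j) := fun j => hprob j.succ
    haveI : IsProbabilityMeasure (Measure.pi Q') := by infer_instance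
    obtain ⟨ihInt, ihLe⟩ := ih S' Q' (fun j => hprob j.succ) (fun j => hint j.succ)
      (fun j => by simpa [hS'def] using hS j.succ) (by simpa [hS'def] using hSm)
    set e := MeasurableEquiv.piFinSuccAbove (fun _ : Fin (m+1) => ℝ) 0 with hedef
    have MP := measurePreserving_piFinSuccAbove Q 0
    simp only [Fin.succAbove_zero] at MP
    set F : ℝ × (Fin m → ℝ) → ℝ :=
      fun z => if S 1 ≤ z.1 then z.1 else acceptedValue m S' z.2 with hFdef
    have hcomp : acceptedValue (m+1) S = F ∘ e := by
      funext x
      rw [acceptedValue_succ_eq]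
      simp only [Function.comp, hedef, MeasurableEquiv.piFinSuccAbove_apply, hFdef,
        Fin.insertNthEquiv_symm_apply, Fin.removeNth_zero]
      rfl
    set f1 : ℝ → ℝ := Set.indicator (Set.Ici (S 1)) id with hf1def
    set c : ℝ → ℝ := Set.indicator (Set.Iio (S 1)) (fun _ => 1) with hcdef
    have hf1 : Integrable f1 (Q 0) := (hint 0).indicator measurableSet_Ici
    have hc : Integrable c (Q 0) := (integrable_const 1).indicator measurableSet_Iio
    have hFeq : F = fun z => f1 z.1 + c z.1 * acceptedValue m S' z.2 := by
      funext z
      by_cases h : S 1 ≤ z.1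
      · simp [hFdef, hf1def, hcdef, Set.indicator_apply, h, not_lt.2 h]
      · simp [hFdef, hf1def, hcdef, Set.indicator_apply, h, lt_of_not_ge h]
    have hFint : Integrable F ((Q 0).prod (Measure.pi Q')) := by
      rw [hFeq]
      have h1 : Integrable (fun z : ℝ × (Fin m → ℝ) => f1 z.1)
          ((Q 0).prod (Measure.pi Q')) := by
        simpa using hf1.mul_prod (integrable_const (1:ℝ))
      exact h1.add (hc.mul_prod ihInt)
    refine ⟨by rw [hcomp]; exact (MP.integrable_comp_emb e.measurableEmbedding).mpr hFint, ?_⟩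
    set C := ∫ y, acceptedValue m S' y ∂(Measure.pi Q') with hCdef
    have hC : S 1 ≤ C := ihLe
    have hIeq : ∫ x, acceptedValue (m+1) S x ∂(Measure.pi Q)
        = ∫ a, ∫ y, F (a, y) ∂(Measure.pi Q') ∂(Q 0) := by
      rw [hcomp]
      rw [show (∫ x, (F ∘ e) x ∂(Measure.pi Q)) = ∫ z, F z ∂((Q 0).prod (Measure.pi Q'))
        from MP.integral_comp e.measurableEmbedding F]
      exact integral_prod F hFint
    have hinner : ∀ a : ℝ, ∫ y, F (a, y) ∂(Measure.pi Q') = if S 1 ≤ a then a else C := by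
      intro a
      by_cases h : S 1 ≤ a <;> simp [hFdef, h, hCdef]
    have hite_int : Integrable (fun a : ℝ => if S 1 ≤ a then a else C) (Q 0) := by
      have heq : (fun a : ℝ => if S 1 ≤ a then a else C) = fun a => f1 a + c a * C := by
        funext a
        by_cases h : S 1 ≤ a
        · simp [hf1def, hcdef, Set.indicator_apply, h, not_lt.2 h]
        · simp [hf1def, hcdef, Set.indicator_apply, h, lt_of_not_ge h]
      rw [heq]
      exact hf1.add (hc.mul_const C)
    have hmax_int : Integrable (fun a : ℝ => max (S 1) a) (Q 0) := by
      exact (integrable_const (S 1)).sup (hint 0)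
    have hmono : ∫ a, max (S 1) a ∂(Q 0) ≤ ∫ a, (if S 1 ≤ a then a else C) ∂(Q 0) := by
      refine integral_mono hmax_int hite_int fun a => ?_
      by_cases h : S 1 ≤ a
      · simp [h, max_eq_right h]
      · simpa [h, max_eq_left (le_of_lt (lt_of_not_ge h))] using hC
    calc S 0 ≤ ∫ a, max (S 1) a ∂(Q 0) := by simpa using hS 0
      _ ≤ ∫ a, (if S 1 ≤ a then a else C) ∂(Q 0) := hmono
      _ = ∫ a, ∫ y, F (a, y) ∂(Measure.pi Q') ∂(Q 0) := by
          exact (integral_congr_ae (Filter.Eventually.of_forall hinner)).symm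
      _ = ∫ x, acceptedValue (m+1) S x ∂(Measure.pi Q) := hIeq.symm

lemma robustT_eq (Ps : ℕ → Set (Measure ℝ)) (n i : ℕ) (h : i < n) :
    robustT Ps n i =
      sInf ((fun P => ∫ x, max (robustT Ps n (i + 1)) x ∂P) '' Ps (i + 1)) := by
  have h1 : n - i = (n - (i + 1)) + 1 := by omega
  have h2 : n - (n - (i + 1)) = i + 1 := by omega
  rw [robustT, h1, robustTAux, h2]
  rfl


theorem stmt0 (n : ℕ) (hn : 1 ≤ n) (Ps : ℕ → Set (Measure ℝ))
    (hne : ∀ i, 1 ≤ i → i ≤ n → (Ps i).Nonempty)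
    (hprob : ∀ i, 1 ≤ i → i ≤ n → ∀ P ∈ Ps i, IsProbabilityMeasure P)
    (hsupp : ∀ i, 1 ≤ i → i ≤ n → ∀ P ∈ Ps i, P (Set.Ici (0 : ℝ)) = 1)
    (hint : ∀ i, 1 ≤ i → i ≤ n → ∀ P ∈ Ps i, Integrable (fun x : ℝ => x) P)
    (P : ℕ → Measure ℝ) (hP : ∀ i, 1 ≤ i → i ≤ n → P i ∈ Ps i) :
    robustT Ps n 0 ≤
      ∫ x, acceptedValue n (robustT Ps n) x ∂(Measure.pi fun j : Fin n => P (j.1 + 1)) := by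
  have hQprob : ∀ j : Fin n, IsProbabilityMeasure (P (j.1 + 1)) := fun j =>
    hprob (j.1 + 1) (by omega) (by have := j.isLt; omega) _ (hP _ (by omega) (by have := j.isLt; omega))
  have hQint : ∀ j : Fin n, Integrable (fun x : ℝ => x) (P (j.1 + 1)) := fun j =>
    hint (j.1 + 1) (by omega) (by have := j.isLt; omega) _ (hP _ (by omega) (by have := j.isLt; omega))
  refine (key n (robustT Ps n) (fun j : Fin n => P (j.1 + 1)) hQprob hQint ?_ ?_).2
  · intro j
    have hj : j.1 + 1 ≤ n := j.isLt
    rw [robustT_eq Ps n j.1 j.isLt]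
    refine csInf_le ?_ ⟨P (j.1 + 1), hP _ (by omega) hj, rfl⟩
    refine ⟨robustT Ps n (j.1 + 1), ?_⟩
    rintro v ⟨P', hP', rfl⟩
    haveI := hprob (j.1 + 1) (by omega) hj P' hP'
    have hint' := hint (j.1 + 1) (by omega) hj P' hP'
    have hmax : Integrable (fun x : ℝ => max (robustT Ps n (j.1 + 1)) x) P' := by
      exact (integrable_const (robustT Ps n (j.1 + 1))).sup hint'
    calc robustT Ps n (j.1 + 1)
        = ∫ _, robustT Ps n (j.1 + 1) ∂P' := by simp
      _ ≤ ∫ x, max (robustT Ps n (j.1 + 1)) x ∂P' :=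
          integral_mono (integrable_const _) hmax fun x => le_max_left _ _
  · have : robustT Ps n n = 0 := by simp [robustT, robustTAux]
    simp [this]
end

section
/- Let n ≥ 1 and let 𝒫₁, …, 𝒫ₙ be nonempty sets of Borel probability measures on [0,∞), each containing only measures with finite mean. Let T be the robust thresholds associated with 𝒫₁, …, 𝒫ₙ. Let r_i : [0,∞)^i → [0,1], i = 1,…,n, be Borel measurable functions (a randomized stopping rule), and define the payoff function g(x₁,…,xₙ) = Σ_{i=1}^n xᵢ · rᵢ(x₁,…,xᵢ) · Π_{j<i} (1 − r_j(x₁,…,x_j)). Then the infimum, over all choices of Pᵢ ∈ 𝒫ᵢ (i = 1,…,n), of ∫ g d(P₁ ⊗ ⋯ ⊗ Pₙ) is at most T(0). -/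
open MeasureTheory

noncomputable def payoff (n : ℕ) (r : ℕ → (Fin n → ℝ) → ℝ) (x : Fin n → ℝ) : ℝ :=
  ∑ j : Fin n, x j * r (j.1 + 1) x * ∏ k ∈ Finset.Iio j, (1 - r (k.1 + 1) x)

lemma Iio_succ_eq {n : ℕ} (i : Fin n) :
    Finset.Iio (i.succ) = insert 0 ((Finset.Iio i).map ⟨Fin.succ, Fin.succ_injective n⟩) := by
  ext k
  simp only [Finset.mem_Iio, Finset.mem_insert, Finset.mem_map, Function.Embedding.coeFn_mk]
  constructor
  · intro hk
    rcases Fin.eq_zero_or_eq_succ k with h | ⟨k', rfl⟩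
    · exact Or.inl h
    · exact Or.inr ⟨k', by simpa [Fin.succ_lt_succ_iff] using hk, rfl⟩
  · rintro (rfl | ⟨k', hk', rfl⟩)
    · exact Fin.succ_pos i
    · exact Fin.succ_lt_succ_iff.mpr hk'

lemma payoff_cons {n : ℕ} (r : ℕ → (Fin (n+1) → ℝ) → ℝ) (a : ℝ) (y : Fin n → ℝ) :
    payoff (n+1) r (Fin.cons a y)
      = a * r 1 (Fin.cons a y)
        + (1 - r 1 (Fin.cons a y)) * payoff n (fun i y' => r (i+1) (Fin.cons a y')) y := by
  unfold payoff
  rw [Fin.sum_univ_succ]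
  congr 1
  · rw [show Finset.Iio (0 : Fin (n+1)) = ∅ from by ext k; simp]
    simp
  · rw [Finset.mul_sum]
    refine Finset.sum_congr rfl fun i _ => ?_
    rw [Iio_succ_eq, Finset.prod_insert (by simp [Fin.succ_ne_zero]), Finset.prod_map]
    simp only [Fin.cons_zero, Fin.cons_succ, Fin.val_succ, Fin.val_zero,
      Function.Embedding.coeFn_mk]
    ring

lemma payoff_measurable {n : ℕ} (r : ℕ → (Fin n → ℝ) → ℝ) (hr : ∀ i, Measurable (r i)) :
    Measurable (payoff n r) := by
  unfold payoff
  exact Finset.measurable_sum _ fun j _ =>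
    ((measurable_pi_apply j).mul (hr _)).mul
      (Finset.measurable_prod _ fun k _ => measurable_const.sub (hr _))

lemma abs_payoff_le {n : ℕ} (r : ℕ → (Fin n → ℝ) → ℝ)
    (hr01 : ∀ i x, 0 ≤ r i x ∧ r i x ≤ 1) (x : Fin n → ℝ) :
    |payoff n r x| ≤ ∑ j, |x j| := by
  unfold payoff
  refine (Finset.abs_sum_le_sum_abs _ _).trans (Finset.sum_le_sum fun j _ => ?_)
  rw [abs_mul, abs_mul]
  have h1 : |r (j.1+1) x| ≤ 1 :=
    abs_le.mpr ⟨by linarith [(hr01 (j.1+1) x).1], (hr01 _ x).2⟩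
  have h2 : |∏ k ∈ Finset.Iio j, (1 - r (k.1+1) x)| ≤ 1 := by
    rw [Finset.abs_prod]
    exact Finset.prod_le_one (fun k _ => abs_nonneg _)
      (fun k _ => abs_le.mpr ⟨by linarith [(hr01 (k.1+1) x).2], by linarith [(hr01 (k.1+1) x).1]⟩)
  calc |x j| * |r (j.1+1) x| * |∏ k ∈ Finset.Iio j, (1 - r (k.1+1) x)|
      ≤ |x j| * 1 * 1 := by
        gcongr
    _ = |x j| := by ring

lemma pi_map_eval {n : ℕ} (Q : Fin n → Measure ℝ) [∀ j, IsProbabilityMeasure (Q j)]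
    (j : Fin n) : (Measure.pi Q).map (fun x => x j) = Q j := by
  ext s hs
  rw [Measure.map_apply (measurable_pi_apply j) hs]
  have he : (fun x : Fin n → ℝ => x j) ⁻¹' s
      = Set.pi Set.univ (Function.update (fun _ => Set.univ) j s) := by
    ext x
    simp only [Set.mem_preimage, Set.mem_univ_pi]
    constructor
    · intro hx i
      rcases eq_or_ne i j with rfl | hij
      · simpa using hx
      · simp [Function.update_of_ne hij]
    · intro hx
      simpa using hx j
  rw [he, Measure.pi_pi]
  rw [Finset.prod_eq_single j (fun i _ hij => by simp [Function.update_of_ne hij])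
    (by simp)]
  simp

lemma integrable_eval {n : ℕ} (Q : Fin n → Measure ℝ) [∀ j, IsProbabilityMeasure (Q j)]
    (hQi : ∀ j, Integrable (fun x : ℝ => x) (Q j)) (j : Fin n) :
    Integrable (fun x : Fin n → ℝ => x j) (Measure.pi Q) := by
  have h := hQi j
  rw [← pi_map_eval Q j] at h
  exact (integrable_map_measure h.aestronglyMeasurable
    (measurable_pi_apply j).aemeasurable).mp h

lemma payoff_integrable {n : ℕ} (Q : Fin n → Measure ℝ) [∀ j, IsProbabilityMeasure (Q j)]
    (hQi : ∀ j, Integrable (fun x : ℝ => x) (Q j)) (r : ℕ → (Fin n → ℝ) → ℝ)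
    (hr : ∀ i, Measurable (r i)) (hr01 : ∀ i x, 0 ≤ r i x ∧ r i x ≤ 1) :
    Integrable (payoff n r) (Measure.pi Q) := by
  have hb : Integrable (fun x : Fin n → ℝ => ∑ j, |x j|) (Measure.pi Q) :=
    integrable_finset_sum _ fun j _ => (integrable_eval Q hQi j).abs
  exact hb.mono' (payoff_measurable r hr).aestronglyMeasurable
    (Filter.Eventually.of_forall fun x => by
      simpa [Real.norm_eq_abs] using abs_payoff_le r hr01 x)

lemma integrable_max_const (c : ℝ) (μ : Measure ℝ) [IsFiniteMeasure μ]
    (h : Integrable (fun x : ℝ => x) μ) :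
    Integrable (fun a : ℝ => max c a) μ := by
  refine ((integrable_const |c|).add h.abs).mono'
    (measurable_const.max measurable_id).aestronglyMeasurable
    (Filter.Eventually.of_forall fun a => ?_)
  simp only [Real.norm_eq_abs, Pi.add_apply]
  rcases max_choice c a with hm | hm <;> rw [hm]
  · linarith [abs_nonneg a]
  · linarith [abs_nonneg c]

lemma lemA : ∀ (n : ℕ) (Q : Fin n → Measure ℝ),
    (∀ j, IsProbabilityMeasure (Q j)) →
    (∀ j, Integrable (fun x : ℝ => x) (Q j)) →
    ∀ (r : ℕ → (Fin n → ℝ) → ℝ), (∀ i, Measurable (r i)) →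
    (∀ i x, 0 ≤ r i x ∧ r i x ≤ 1) →
    (∀ i (x y : Fin n → ℝ), (∀ j : Fin n, j.1 + 1 ≤ i → x j = y j) → r i x = r i y) →
    ∀ (t : ℕ → ℝ) (δ : ℝ), 0 ≤ δ → t n = 0 →
    (∀ j : Fin n, ∫ x, max (t (j.1 + 1)) x ∂(Q j) ≤ t j.1 + δ) →
    ∫ x, payoff n r x ∂(Measure.pi Q) ≤ t 0 + n * δ := by
  intro n
  induction n with
  | zero =>
    intro Q _ _ r _ _ _ t δ hδ htn _
    simp [payoff, htn]
  | succ n IH =>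
    intro Q hQp hQi r hrm hr01 hrad t δ hδ htn ht
    haveI : ∀ j, IsProbabilityMeasure (Q j) := hQp
    haveI : ∀ j : Fin n, IsProbabilityMeasure (Q j.succ) := fun j => hQp j.succ
    set ν := Measure.pi (fun j : Fin n => Q j.succ) with hν
    haveI : IsProbabilityMeasure ν := by infer_instance
    -- measurable cons
    have hcons_meas : ∀ a : ℝ, Measurable (fun y : Fin n → ℝ => (Fin.cons a y : Fin (n+1) → ℝ)) := by
      intro a
      refine measurable_pi_iff.mpr fun j => ?_
      refine Fin.cases ?_ ?_ j
      · simpa using measurable_const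
      · intro i; simpa using measurable_pi_apply i
    -- integrability on the pi space
    have hIntPi : Integrable (payoff (n+1) r) (Measure.pi Q) :=
      payoff_integrable Q hQi r hrm hr01
    -- Fubini via piFinSuccAbove at 0
    have hmp := (measurePreserving_piFinSuccAbove Q 0).symm
    have hemb := (MeasurableEquiv.piFinSuccAbove (fun _ : Fin (n+1) => ℝ) 0).symm.measurableEmbedding
    have hsymm : ∀ z : ℝ × (Fin n → ℝ),
        (MeasurableEquiv.piFinSuccAbove (fun _ : Fin (n+1) => ℝ) 0).symm z
          = Fin.cons z.1 z.2 := by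
      intro z
      simp only [MeasurableEquiv.piFinSuccAbove_symm_apply, Fin.insertNthEquiv,
        Fin.insertNth_zero, Equiv.coe_fn_mk]
      ext j
      refine Fin.cases ?_ ?_ j <;> intros <;> simp
    have hprodm : (Q 0).prod ν
        = (Q 0).prod (Measure.pi fun j => Q ((0 : Fin (n+1)).succAbove j)) := by
      simp only [hν, Fin.zero_succAbove]
    have hIntProd : Integrable (fun z : ℝ × (Fin n → ℝ) => payoff (n+1) r (Fin.cons z.1 z.2))
        ((Q 0).prod ν) := by
      rw [hprodm]
      have := (hmp.integrable_comp_emb hemb (g := payoff (n+1) r)).mpr hIntPi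
      refine this.congr (Filter.Eventually.of_forall fun z => ?_)
      rw [Function.comp_apply, hsymm]
    have key : ∫ x, payoff (n+1) r x ∂(Measure.pi Q)
        = ∫ a, ∫ y, payoff (n+1) r (Fin.cons a y) ∂ν ∂(Q 0) := by
      rw [← hmp.integral_comp hemb (payoff (n+1) r)]
      rw [← hprodm]
      rw [← integral_prod _ hIntProd]
      exact integral_congr_ae (Filter.Eventually.of_forall fun z => by
        dsimp only
        rw [hsymm])
    -- shifted rule
    set r' : ℝ → ℕ → (Fin n → ℝ) → ℝ := fun a i y => r (i+1) (Fin.cons a y) with hr'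
    have hr'm : ∀ a i, Measurable (r' a i) := fun a i => (hrm (i+1)).comp (hcons_meas a)
    have hr'01 : ∀ a i y, 0 ≤ r' a i y ∧ r' a i y ≤ 1 := fun a i y => hr01 (i+1) _
    have hr'ad : ∀ a i (y z : Fin n → ℝ),
        (∀ j : Fin n, j.1 + 1 ≤ i → y j = z j) → r' a i y = r' a i z := by
      intro a i y z h
      refine hrad (i+1) _ _ fun j hj => ?_
      rcases Fin.eq_zero_or_eq_succ j with rfl | ⟨j', rfl⟩
      · simp
      · simp only [Fin.val_succ] at hj
        simp only [Fin.cons_succ]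
        exact h j' (by omega)
    have hIH : ∀ a, ∫ y, payoff n (r' a) y ∂ν ≤ t 1 + n * δ := by
      intro a
      have h := IH (fun j => Q j.succ) (fun j => hQp j.succ) (fun j => hQi j.succ)
        (r' a) (hr'm a) (fun i y => hr'01 a i y) (hr'ad a)
        (fun i => t (i+1)) δ hδ htn
        (fun j => by simpa [Fin.val_succ] using ht j.succ)
      simpa using h
    have hρ : ∀ a (y : Fin n → ℝ), r 1 (Fin.cons a y) = r 1 (Fin.cons a 0) := by
      intro a y
      refine hrad 1 _ _ fun j hj => ?_
      rcases Fin.eq_zero_or_eq_succ j with rfl | ⟨j', rfl⟩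
      · simp
      · simp only [Fin.val_succ] at hj; omega
    have hinner : ∀ a, ∫ y, payoff (n+1) r (Fin.cons a y) ∂ν
        = a * r 1 (Fin.cons a 0)
          + (1 - r 1 (Fin.cons a 0)) * ∫ y, payoff n (r' a) y ∂ν := by
      intro a
      have h1 : (fun y => payoff (n+1) r (Fin.cons a y))
          = fun y => a * r 1 (Fin.cons a 0)
            + (1 - r 1 (Fin.cons a 0)) * payoff n (r' a) y := by
        funext y
        rw [payoff_cons, hρ a y]
      rw [h1, integral_add (integrable_const _)
        (((payoff_integrable _ (fun j => hQi j.succ) (r' a) (hr'm a)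
          (fun i y => hr'01 a i y))).const_mul _),
        integral_const, integral_const_mul]
      simp [hν]
    have hbound : ∀ a, ∫ y, payoff (n+1) r (Fin.cons a y) ∂ν ≤ max (t 1 + n * δ) a := by
      intro a
      rw [hinner a]
      obtain ⟨h0, h1'⟩ := hr01 1 (Fin.cons a 0)
      have hI := hIH a
      have hM1 := le_max_left (t 1 + n*δ) a
      have hM2 := le_max_right (t 1 + n*δ) a
      nlinarith [mul_nonneg (sub_nonneg.mpr h1') (sub_nonneg.mpr hI),
        mul_nonneg h0 (sub_nonneg.mpr hM2),
        mul_nonneg (sub_nonneg.mpr h1') (sub_nonneg.mpr hM1)]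
    have hFint : Integrable (fun a => ∫ y, payoff (n+1) r (Fin.cons a y) ∂ν) (Q 0) :=
      hIntProd.integral_prod_left
    have hG1 : Integrable (fun a : ℝ => max (t 1) a) (Q 0) := integrable_max_const _ _ (hQi 0)
    have hG2 : Integrable (fun a : ℝ => max (t 1 + n*δ) a) (Q 0) :=
      integrable_max_const _ _ (hQi 0)
    have hnδ : (0:ℝ) ≤ n * δ := mul_nonneg (Nat.cast_nonneg n) hδ
    have step1 : ∫ a, ∫ y, payoff (n+1) r (Fin.cons a y) ∂ν ∂(Q 0)
        ≤ ∫ a, max (t 1 + n*δ) a ∂(Q 0) := integral_mono hFint hG2 hbound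
    have step2 : ∫ a, max (t 1 + n*δ) a ∂(Q 0) ≤ ∫ a, (max (t 1) a + n*δ) ∂(Q 0) := by
      refine integral_mono hG2 (hG1.add (integrable_const _)) fun a => ?_
      exact max_le (by linarith [le_max_left (t 1) a]) (by linarith [le_max_right (t 1) a])
    have step3 : ∫ a, (max (t 1) a + n*δ) ∂(Q 0) = ∫ a, max (t 1) a ∂(Q 0) + n*δ := by
      rw [integral_add hG1 (integrable_const _), integral_const]
      simp
    have step4 : ∫ a, max (t 1) a ∂(Q 0) ≤ t 0 + δ := by simpa using ht 0
    rw [key]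
    push_cast
    linarith

theorem stmt1 (n : ℕ) (hn : 1 ≤ n) (Ps : ℕ → Set (Measure ℝ))
    (hne : ∀ i, 1 ≤ i → i ≤ n → (Ps i).Nonempty)
    (hprob : ∀ i, 1 ≤ i → i ≤ n → ∀ P ∈ Ps i, IsProbabilityMeasure P)
    (hsupp : ∀ i, 1 ≤ i → i ≤ n → ∀ P ∈ Ps i, P (Set.Ici (0 : ℝ)) = 1)
    (hint : ∀ i, 1 ≤ i → i ≤ n → ∀ P ∈ Ps i, Integrable (fun x : ℝ => x) P)
    -- a randomized stopping rule: `r i x` is the probability of accepting offer `i`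
    -- (coordinate `j : Fin n` corresponds to offer `j+1`)
    (r : ℕ → (Fin n → ℝ) → ℝ)
    (hr_meas : ∀ i, Measurable (r i))
    (hr01 : ∀ i x, 0 ≤ r i x ∧ r i x ≤ 1)
    -- `r i` depends only on the first `i` offer values
    (hr_adapted : ∀ i (x y : Fin n → ℝ),
      (∀ j : Fin n, j.1 + 1 ≤ i → x j = y j) → r i x = r i y) :
    sInf {v : ℝ | ∃ P : ℕ → Measure ℝ, (∀ i, 1 ≤ i → i ≤ n → P i ∈ Ps i) ∧
        v = ∫ x, (∑ j : Fin n, x j * r (j.1 + 1) x *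
              ∏ k ∈ Finset.Iio j, (1 - r (k.1 + 1) x))
            ∂(Measure.pi fun j : Fin n => P (j.1 + 1))} ≤ robustT Ps n 0 := by
  set T := robustT Ps n with hTdef
  have hTrec : ∀ i, i < n →
      T i = sInf ((fun P => ∫ x, max (T (i+1)) x ∂P) '' Ps (i+1)) := by
    intro i hi
    show robustTAux Ps n (n - i) = _
    rw [show n - i = (n - (i+1)) + 1 by omega]
    rw [robustTAux]
    rw [show n - (n - (i+1)) = i + 1 by omega]
    rfl
  have hTn : T n = 0 := by
    show robustTAux Ps n (n - n) = 0
    simp [robustTAux]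
  have hmax_int : ∀ (c : ℝ) i, 1 ≤ i → i ≤ n → ∀ P ∈ Ps i,
      Integrable (fun x => max c x) P := by
    intro c i h1 h2 P hP
    haveI := hprob i h1 h2 P hP
    exact integrable_max_const c P (hint i h1 h2 P hP)
  have hlb : ∀ i, i < n → ∀ P ∈ Ps (i+1), T (i+1) ≤ ∫ x, max (T (i+1)) x ∂P := by
    intro i hi P hP
    haveI := hprob (i+1) (by omega) (by omega) P hP
    calc T (i+1) = ∫ _x, T (i+1) ∂P := by simp
      _ ≤ ∫ x, max (T (i+1)) x ∂P :=
        integral_mono (integrable_const _) (hmax_int _ _ (by omega) (by omega) P hP)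
          fun x => le_max_left _ _
  have hmono : ∀ i, i < n → T (i+1) ≤ T i := by
    intro i hi
    rw [hTrec i hi]
    refine le_csInf ((hne (i+1) (by omega) (by omega)).image _) ?_
    rintro v ⟨P, hP, rfl⟩
    exact hlb i hi P hP
  have hTnonneg : ∀ k, k ≤ n → 0 ≤ T (n - k) := by
    intro k
    induction k with
    | zero => intro _; simpa using hTn.ge
    | succ k IHk =>
      intro hk
      have h1 : n - (k+1) < n := by omega
      have h2 : n - (k+1) + 1 = n - k := by omega
      have h3 := hmono _ h1
      rw [h2] at h3
      exact le_trans (IHk (by omega)) h3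
  have hT0 : 0 ≤ T 0 := by simpa using hTnonneg n le_rfl
  by_cases hbdd : BddBelow {v : ℝ | ∃ P : ℕ → Measure ℝ,
      (∀ i, 1 ≤ i → i ≤ n → P i ∈ Ps i) ∧
      v = ∫ x, (∑ j : Fin n, x j * r (j.1 + 1) x *
            ∏ k ∈ Finset.Iio j, (1 - r (k.1 + 1) x))
          ∂(Measure.pi fun j : Fin n => P (j.1 + 1))}
  · refine le_of_forall_pos_le_add fun ε hε => ?_
    set δ := ε / n with hδdef
    have hnpos : (0:ℝ) < n := by exact_mod_cast hn
    have hδ : 0 < δ := div_pos hε hnpos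
    have hch : ∀ i : ℕ, ∃ P : Measure ℝ, 1 ≤ i → i ≤ n →
        P ∈ Ps i ∧ ∫ x, max (T i) x ∂P < T (i-1) + δ := by
      intro i
      by_cases h : 1 ≤ i ∧ i ≤ n
      · obtain ⟨h1, h2⟩ := h
        have hlt : T (i-1) < T (i-1) + δ := by linarith
        have hrec := hTrec (i-1) (by omega)
        rw [show i - 1 + 1 = i by omega] at hrec
        conv at hlt => lhs; rw [hrec]
        obtain ⟨v, ⟨P, hPm, rfl⟩, hv⟩ :=
          exists_lt_of_csInf_lt ((hne i h1 h2).image _) hlt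
        exact ⟨P, fun _ _ => ⟨hPm, hv⟩⟩
      · exact ⟨0, fun h1 h2 => absurd ⟨h1, h2⟩ h⟩
    choose P hP using hch
    have hPmem : ∀ i, 1 ≤ i → i ≤ n → P i ∈ Ps i := fun i h1 h2 => (hP i h1 h2).1
    haveI hQp : ∀ j : Fin n, IsProbabilityMeasure (P (j.1+1)) := fun j =>
      hprob _ (by omega) (by have := j.isLt; omega)
        _ (hPmem _ (by omega) (by have := j.isLt; omega))
    have hQi : ∀ j : Fin n, Integrable (fun x : ℝ => x) (P (j.1+1)) := fun j =>
      hint _ (by omega) (by have := j.isLt; omega)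
        _ (hPmem _ (by omega) (by have := j.isLt; omega))
    have ht : ∀ j : Fin n, ∫ x, max (T (j.1+1)) x ∂(P (j.1+1)) ≤ T j.1 + δ := by
      intro j
      have h := (hP (j.1+1) (by omega) (by have := j.isLt; omega)).2
      simpa using h.le
    have hmain := lemA n (fun j : Fin n => P (j.1+1)) hQp hQi r hr_meas hr01 hr_adapted
      T δ hδ.le hTn ht
    have hvmem : (∫ x, payoff n r x ∂(Measure.pi fun j : Fin n => P (j.1+1)))
        ∈ {v : ℝ | ∃ P : ℕ → Measure ℝ, (∀ i, 1 ≤ i → i ≤ n → P i ∈ Ps i) ∧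
          v = ∫ x, (∑ j : Fin n, x j * r (j.1 + 1) x *
                ∏ k ∈ Finset.Iio j, (1 - r (k.1 + 1) x))
              ∂(Measure.pi fun j : Fin n => P (j.1 + 1))} := ⟨P, hPmem, rfl⟩
    have hle := csInf_le hbdd hvmem
    have hnδ : (n:ℝ) * δ = ε := by
      rw [hδdef]
      field_simp
    linarith
  · rw [Real.sInf_of_not_bddBelow hbdd]
    exact hT0
end

section
/- Let n ∈ ℕ, let μ, L > 0 and σ² ≥ 0 with L ≤ 2μ and σ² ≤ μ(L − μ). Take 𝒫ᵢ = P₂(μ,σ²,L) for all i = 1,…,n. Then the robust thresholds satisfy T(i) = μ + (σ²/μ)·(1 − (σ²/(μ² + σ²))^{n−1−i}) for every i with 0 ≤ i ≤ n − 1, and T(n) = 0. -/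
open MeasureTheory

/-- The two-point measure `p·δ_a + (1-p)·δ_b`. -/
noncomputable def twoPoint (p a b : ℝ) : Measure ℝ :=
  ENNReal.ofReal p • Measure.dirac a + ENNReal.ofReal (1 - p) • Measure.dirac b

/-- `P₂(μ,σ²,L)`: two-point distributions `p·δ_a + (1-p)·δ_b` with `0 ≤ a ≤ b ≤ L`,
`p ∈ [0,1]`, mean `μ` and second moment `μ² + σ²`. -/
noncomputable def P2set (μ s2 L : ℝ) : Set (Measure ℝ) :=
  {P | ∃ p a b : ℝ, 0 ≤ a ∧ a ≤ b ∧ b ≤ L ∧ 0 ≤ p ∧ p ≤ 1 ∧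
    p * a + (1 - p) * b = μ ∧ p * a ^ 2 + (1 - p) * b ^ 2 = μ ^ 2 + s2 ∧
    P = twoPoint p a b}

lemma integrable_dirac_real {f : ℝ → ℝ} (hf : Measurable f) (a : ℝ) :
    Integrable f (Measure.dirac a) := by
  refine ⟨hf.aestronglyMeasurable, ?_⟩
  simp [HasFiniteIntegral, lintegral_dirac]

lemma integral_twoPoint {p a b : ℝ} (hp0 : 0 ≤ p) (hp1 : p ≤ 1) {f : ℝ → ℝ}
    (hf : Measurable f) :
    ∫ x, f x ∂(twoPoint p a b) = p * f a + (1 - p) * f b := by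
  have h1 : Integrable f (ENNReal.ofReal p • Measure.dirac a) :=
    (integrable_dirac_real hf a).smul_measure ENNReal.ofReal_ne_top
  have h2 : Integrable f (ENNReal.ofReal (1 - p) • Measure.dirac b) :=
    (integrable_dirac_real hf b).smul_measure ENNReal.ofReal_ne_top
  rw [twoPoint, integral_add_measure h1 h2, integral_smul_measure, integral_smul_measure,
    integral_dirac, integral_dirac, ENNReal.toReal_ofReal hp0,
    ENNReal.toReal_ofReal (by linarith)]
  simp [smul_eq_mul]

lemma core_lb (μ L s2 p a b t : ℝ) (hμ : 0 < μ) (hs2 : 0 ≤ s2) (hL2μ : L ≤ 2 * μ)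
    (ha : 0 ≤ a) (hab : a ≤ b) (hbL : b ≤ L) (hp0 : 0 ≤ p) (hp1 : p ≤ 1)
    (hm : p * a + (1 - p) * b = μ) (hv : p * a ^ 2 + (1 - p) * b ^ 2 = μ ^ 2 + s2)
    (htub : t * μ ≤ μ ^ 2 + s2) (htc : t = 0 ∨ μ ≤ t) :
    μ + s2 / (μ ^ 2 + s2) * t ≤ p * max t a + (1 - p) * max t b := by
  have hmu2 : 0 < μ ^ 2 + s2 := by positivity
  rcases htc with rfl | htμ
  · rw [max_eq_right ha, max_eq_right (le_trans ha hab)]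
    rw [mul_zero, add_zero]
    linarith [hm]
  have ht0 : 0 ≤ t := le_of_lt (lt_of_lt_of_le hμ htμ)
  have hs2eq : s2 = (μ - a) * (b - μ) := by linear_combination (a + b) * hm - hv
  have pba : b - μ = p * (b - a) := by linear_combination hm
  have haμ : a ≤ μ := by
    nlinarith [mul_nonneg (by linarith : (0:ℝ) ≤ 1 - p) (by linarith : (0:ℝ) ≤ b - a)]
  have hbμ : μ ≤ b := by nlinarith [mul_nonneg hp0 (by linarith : (0:ℝ) ≤ b - a)]
  rcases eq_or_lt_of_le hab with rfl | hab'
  · have hsz : s2 = 0 := by nlinarith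
    have haeq : a = μ := le_antisymm haμ hbμ
    have hteq : t = μ := by
      refine le_antisymm ?_ htμ
      nlinarith
    rw [hteq, haeq, max_self, hsz]
    rw [zero_div, zero_mul, add_zero]
    nlinarith
  · have htb : t ≤ b := by nlinarith [mul_nonneg ha (by linarith : (0:ℝ) ≤ b - μ)]
    rw [max_eq_right htb, max_eq_left (le_trans haμ htμ)]
    have hfac : ((p * t + (1 - p) * b - μ) * (μ ^ 2 + s2) - s2 * t) * (b - a)
        = (b - μ) * (a * ((μ - a) * (2 * t - b) + a * (t - μ))) := by
      linear_combination ((μ ^ 2 + s2) * (b - t)) * hm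
        + ((t - a) * (b - μ) - t * (b - a)) * hs2eq
    have hX : 0 ≤ (b - μ) * (a * ((μ - a) * (2 * t - b) + a * (t - μ))) := by
      apply mul_nonneg (by linarith)
      apply mul_nonneg ha
      have h2tb : b ≤ 2 * t := by linarith
      have := mul_nonneg (by linarith : (0:ℝ) ≤ μ - a) (by linarith : (0:ℝ) ≤ 2 * t - b)
      have := mul_nonneg ha (by linarith : (0:ℝ) ≤ t - μ)
      linarith
    have hD : 0 ≤ (p * t + (1 - p) * b - μ) * (μ ^ 2 + s2) - s2 * t := by
      by_contra h
      push_neg at h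
      nlinarith [mul_pos (neg_pos.2 h) (by linarith : (0:ℝ) < b - a)]
    have h2 : s2 / (μ ^ 2 + s2) * t = s2 * t / (μ ^ 2 + s2) := by ring
    have h3 : s2 * t / (μ ^ 2 + s2) ≤ p * t + (1 - p) * b - μ := by
      rw [div_le_iff₀ hmu2]
      nlinarith [hD]
    linarith [h2, h3]

lemma key_sInf (μ L s2 : ℝ) (hμ : 0 < μ) (hL : 0 < L) (hs2 : 0 ≤ s2)
    (hL2μ : L ≤ 2 * μ) (hfeas : s2 ≤ μ * (L - μ)) (t : ℝ) (ht0 : 0 ≤ t)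
    (htub : t * μ ≤ μ ^ 2 + s2) (htc : t = 0 ∨ μ ≤ t) :
    sInf ((fun P => ∫ x, max t x ∂P) '' P2set μ s2 L)
      = μ + s2 / (μ ^ 2 + s2) * t := by
  have hmu2 : 0 < μ ^ 2 + s2 := by positivity
  have hmax : Measurable fun x : ℝ => max t x := measurable_const.max measurable_id
  set p0 : ℝ := s2 / (μ ^ 2 + s2) with hp0def
  set b0 : ℝ := (μ ^ 2 + s2) / μ with hb0def
  have hp00 : 0 ≤ p0 := by positivity
  have hp01 : p0 ≤ 1 := by
    rw [hp0def, div_le_one hmu2]; nlinarith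
  have hb00 : 0 ≤ b0 := by positivity
  have hb0L : b0 ≤ L := by
    rw [hb0def, div_le_iff₀ hμ]; nlinarith
  have htb0 : t ≤ b0 := by
    rw [hb0def, le_div_iff₀ hμ]; linarith
  have hmean : p0 * 0 + (1 - p0) * b0 = μ := by
    rw [hp0def, hb0def]; field_simp; ring
  have hvar : p0 * 0 ^ 2 + (1 - p0) * b0 ^ 2 = μ ^ 2 + s2 := by
    rw [hp0def, hb0def]; field_simp; ring
  have hPmem : twoPoint p0 0 b0 ∈ P2set μ s2 L :=
    ⟨p0, 0, b0, le_refl 0, hb00, hb0L, hp00, hp01, hmean, hvar, rfl⟩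
  have hval : (∫ x, max t x ∂(twoPoint p0 0 b0)) = μ + s2 / (μ ^ 2 + s2) * t := by
    rw [integral_twoPoint hp00 hp01 hmax, max_eq_left ht0, max_eq_right htb0]
    have : (1 - p0) * b0 = μ := by linarith [hmean]
    rw [this]; ring
  have hmem : μ + s2 / (μ ^ 2 + s2) * t
      ∈ (fun P => ∫ x, max t x ∂P) '' P2set μ s2 L := ⟨_, hPmem, hval⟩
  have hlb : ∀ y ∈ (fun P => ∫ x, max t x ∂P) '' P2set μ s2 L,
      μ + s2 / (μ ^ 2 + s2) * t ≤ y := by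
    rintro y ⟨P, ⟨p, a, b, ha, hab, hbL, hp0, hp1, hm, hv, rfl⟩, rfl⟩
    simp only
    rw [integral_twoPoint hp0 hp1 hmax]
    exact core_lb μ L s2 p a b t hμ hs2 hL2μ ha hab hbL hp0 hp1 hm hv htub htc
  exact le_antisymm (csInf_le ⟨_, hlb⟩ hmem) (le_csInf ⟨_, hmem⟩ hlb)

theorem stmt2 (n : ℕ) (μ L s2 : ℝ) (hμ : 0 < μ) (hL : 0 < L) (hs2 : 0 ≤ s2)
    (hL2μ : L ≤ 2 * μ) (hfeas : s2 ≤ μ * (L - μ)) :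
    (∀ i : ℕ, i + 1 ≤ n →
      robustT (fun _ => P2set μ s2 L) n i
        = μ + s2 / μ * (1 - (s2 / (μ ^ 2 + s2)) ^ (n - 1 - i))) ∧
    robustT (fun _ => P2set μ s2 L) n n = 0 := by
  have hmu2 : 0 < μ ^ 2 + s2 := by positivity
  set r : ℝ := s2 / (μ ^ 2 + s2) with hrdef
  have hr0 : 0 ≤ r := by positivity
  have hr1 : r < 1 := by
    rw [hrdef, div_lt_one hmu2]; nlinarith
  have hμL : μ ≤ L := by nlinarith
  have hmain : ∀ k : ℕ, robustTAux (fun _ => P2set μ s2 L) n (k + 1)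
      = μ + s2 / μ * (1 - r ^ k) := by
    intro k
    induction k with
    | zero =>
      have h0 : robustTAux (fun _ => P2set μ s2 L) n 0 = 0 := rfl
      show sInf ((fun P => ∫ x, max (robustTAux (fun _ => P2set μ s2 L) n 0) x ∂P)
          '' P2set μ s2 L) = _
      rw [h0, key_sInf μ L s2 hμ hL hs2 hL2μ hfeas 0 le_rfl (by nlinarith) (Or.inl rfl)]
      simp
    | succ k ih =>
      have hqk0 : 0 ≤ r ^ k := pow_nonneg hr0 k
      have hqk1 : r ^ k ≤ 1 := pow_le_one₀ hr0 (le_of_lt hr1)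
      set t := μ + s2 / μ * (1 - r ^ k) with htdef
      have hμt : μ ≤ t := by
        rw [htdef]
        have : 0 ≤ s2 / μ * (1 - r ^ k) := by
          apply mul_nonneg (by positivity); linarith
        linarith
      have ht0 : 0 ≤ t := le_trans (le_of_lt hμ) hμt
      have htub : t * μ ≤ μ ^ 2 + s2 := by
        rw [htdef]
        have h1 : (μ + s2 / μ * (1 - r ^ k)) * μ = μ ^ 2 + s2 * (1 - r ^ k) := by
          field_simp
        rw [h1]
        nlinarith [mul_nonneg hs2 hqk0]
      show sInf ((fun P => ∫ x, max (robustTAux (fun _ => P2set μ s2 L) n (k + 1)) x ∂P)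
          '' P2set μ s2 L) = _
      rw [ih]
      rw [key_sInf μ L s2 hμ hL hs2 hL2μ hfeas t ht0 htub (Or.inr hμt)]
      rw [htdef, hrdef, pow_succ]
      field_simp
      have hX : (μ ^ 2 + s2)⁻¹ * (μ ^ 2 + s2) = 1 := inv_mul_cancel₀ hmu2.ne'
      linear_combination (s2 ^ 2 * s2 ^ k * (μ ^ 2 + s2)⁻¹ ^ k) * hX
  constructor
  · intro i hi
    have hni : n - i = (n - 1 - i) + 1 := by omega
    unfold robustT
    rw [hni, hmain (n - 1 - i)]
  · unfold robustT
    rw [Nat.sub_self]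
    rfl
end

section
/- Let n ∈ ℕ, let 0 < μ < L and 0 ≤ σ² ≤ μ(L − μ). Take 𝒫ᵢ = P(μ,σ²,L) for all i = 1,…,n. Then the robust thresholds satisfy T(i) = μ + (σ²/μ)·(1 − (1 − μ/L)^{n−1−i}) for every i with 0 ≤ i ≤ n − 1, and T(n) = 0. -/
open MeasureTheory

/-- `P(μ,σ²,L)`: Borel probability measures supported in `[0,L]` with mean `μ`
and second moment `μ² + σ²`. -/
def PmvL (μ s2 L : ℝ) : Set (Measure ℝ) :=
  {P | IsProbabilityMeasure P ∧ P (Set.Icc 0 L) = 1 ∧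
       (∫ x, x ∂P) = μ ∧ (∫ x, x ^ 2 ∂P) = μ ^ 2 + s2}


lemma integrable_dirac'' {f : ℝ → ℝ} {a : ℝ} (hf : AEStronglyMeasurable f (Measure.dirac a)) :
    Integrable f (Measure.dirac a) :=
  ⟨hf, by rw [HasFiniteIntegral, lintegral_dirac]; exact ENNReal.coe_lt_top⟩

noncomputable def tp (a b c t L : ℝ) : Measure ℝ :=
  ENNReal.ofReal a • Measure.dirac 0 +
    (ENNReal.ofReal b • Measure.dirac t + ENNReal.ofReal c • Measure.dirac L)

lemma tp_integral (a b c t L : ℝ) (ha : 0 ≤ a) (hb : 0 ≤ b) (hc : 0 ≤ c)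
    (f : ℝ → ℝ) (hf : Measurable f) :
    ∫ x, f x ∂(tp a b c t L) = a * f 0 + (b * f t + c * f L) := by
  have hi : ∀ y : ℝ, Integrable f (Measure.dirac y) := fun y =>
    integrable_dirac'' (hf.aestronglyMeasurable)
  rw [tp, integral_add_measure ((hi 0).smul_measure ENNReal.ofReal_ne_top)
      (((hi t).smul_measure ENNReal.ofReal_ne_top).add_measure
        ((hi L).smul_measure ENNReal.ofReal_ne_top)),
    integral_add_measure ((hi t).smul_measure ENNReal.ofReal_ne_top)
      ((hi L).smul_measure ENNReal.ofReal_ne_top)]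
  simp [integral_smul_measure, ENNReal.toReal_ofReal, ha, hb, hc]

lemma tp_mem (μ s2 L t : ℝ) (hμ : 0 < μ) (hμL : μ < L) (hs2 : 0 ≤ s2)
    (hfeas : s2 ≤ μ * (L - μ)) (hμt : μ ≤ t) (hts : μ * t ≤ μ ^ 2 + s2) (htL : t < L) :
    ∃ P ∈ ({P | IsProbabilityMeasure P ∧ P (Set.Icc 0 L) = 1 ∧
       (∫ x, x ∂P) = μ ∧ (∫ x, x ^ 2 ∂P) = μ ^ 2 + s2} : Set (Measure ℝ)),
      ∫ x, max t x ∂P = t + (μ ^ 2 + s2 - t * μ) / L := by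
  have ht0 : 0 < t := lt_of_lt_of_le hμ hμt
  have hL0 : 0 < L := lt_trans hμ hμL
  have hLt : 0 < L - t := by linarith
  set c := (μ ^ 2 + s2 - t * μ) / (L * (L - t)) with hcdef
  set b := (μ * (L - μ) - s2) / (t * (L - t)) with hbdef
  set a := 1 - b - c with hadef
  have hc : 0 ≤ c := div_nonneg (by nlinarith) (by positivity)
  have hb : 0 ≤ b := div_nonneg (by nlinarith) (by positivity)
  have hbc : b + c ≤ 1 := by
    rw [hbdef, hcdef, div_add_div _ _ (by positivity : t * (L - t) ≠ 0)
      (by positivity : L * (L - t) ≠ 0), div_le_one (by positivity)]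
    nlinarith [mul_nonneg (mul_nonneg (sub_nonneg.2 hμt) (by nlinarith : (0:ℝ) ≤ μ ^ 2 + s2 - μ * t)) (by linarith : (0:ℝ) ≤ L - μ), mul_nonneg hs2 (sub_nonneg.2 hμt), mul_pos ht0 hLt, mul_nonneg (mul_nonneg hs2 hLt.le) (by linarith : (0:ℝ) ≤ L - μ), mul_nonneg (mul_nonneg (sub_nonneg.2 hfeas) hLt.le) ht0.le, mul_nonneg (mul_nonneg (sub_nonneg.2 hμt) hLt.le) hL0.le, sq_nonneg (t - μ), sq_nonneg (L - t)]
  have ha : 0 ≤ a := by rw [hadef]; linarith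
  have habc : a + b + c = 1 := by rw [hadef]; ring
  refine ⟨tp a b c t L, ⟨?_, ?_, ?_, ?_⟩, ?_⟩
  · constructor
    simp only [tp, Measure.add_apply, Measure.smul_apply, smul_eq_mul,
      Measure.dirac_apply_of_mem (Set.mem_univ _), mul_one]
    rw [← ENNReal.ofReal_add hb hc, ← ENNReal.ofReal_add ha (by linarith),
      show a + (b + c) = 1 by linarith]; simp
  · have h0 : (0:ℝ) ∈ Set.Icc 0 L := by constructor <;> linarith
    have h1 : t ∈ Set.Icc 0 L := by constructor <;> linarith
    have h2 : L ∈ Set.Icc 0 L := by constructor <;> linarith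
    simp only [tp, Measure.add_apply, Measure.smul_apply, smul_eq_mul,
      Measure.dirac_apply_of_mem h0, Measure.dirac_apply_of_mem h1,
      Measure.dirac_apply_of_mem h2, mul_one]
    rw [← ENNReal.ofReal_add hb hc, ← ENNReal.ofReal_add ha (by linarith),
      show a + (b + c) = 1 by linarith]; simp
  · rw [tp_integral a b c t L ha hb hc (fun x => x) measurable_id]
    rw [hbdef, hcdef]
    field_simp
    ring
  · rw [tp_integral a b c t L ha hb hc (fun x => x ^ 2) (by measurability)]
    rw [hbdef, hcdef]
    field_simp
    ring
  · rw [tp_integral a b c t L ha hb hc (fun x => max t x) (measurable_const.max measurable_id)]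
    rw [max_eq_left ht0.le, max_self, max_eq_right (by linarith : t ≤ L)]
    rw [hadef, hbdef, hcdef]
    field_simp
    ring

lemma lb_lemma (μ s2 L t : ℝ) (hμ : 0 < μ) (hL : 0 < L) (hs2 : 0 ≤ s2) (P : Measure ℝ)
    (hP : P ∈ ({P | IsProbabilityMeasure P ∧ P (Set.Icc 0 L) = 1 ∧
       (∫ x, x ∂P) = μ ∧ (∫ x, x ^ 2 ∂P) = μ ^ 2 + s2} : Set (Measure ℝ))) :
    t + (μ ^ 2 + s2 - t * μ) / L ≤ ∫ x, max t x ∂P := by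
  obtain ⟨hprob, hsupp, hm, hm2⟩ := hP
  have hae : ∀ᵐ x ∂P, x ∈ Set.Icc 0 L := by
    have hc : P (Set.Icc 0 L)ᶜ = 0 := by
      rw [measure_compl (measurableSet_Icc (a := (0:ℝ)) (b := L)) (measure_ne_top P _),
        hsupp, measure_univ, tsub_self]
    rw [ae_iff]
    exact hc
  have hint1 : Integrable (fun x => x) P := by
    by_contra h
    rw [integral_undef h] at hm
    exact absurd hm.symm (by linarith)
  have hint2 : Integrable (fun x => x ^ 2) P := by
    by_contra h
    rw [integral_undef h] at hm2
    nlinarith [sq_nonneg μ]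
  have hintmax : Integrable (fun x => max t x) P := by
    refine Integrable.mono' (integrable_const (|t| + L))
      (measurable_const.max measurable_id).aestronglyMeasurable ?_
    filter_upwards [hae] with x hx
    rw [Real.norm_eq_abs, abs_le]
    constructor
    · have := le_max_left t x; have := abs_le.1 (le_refl |t|); cases abs_cases t <;> push_cast <;> nlinarith [hx.1, hx.2]
    · cases max_cases t x with
      | inl h => cases abs_cases t <;> nlinarith [hx.2]
      | inr h => cases abs_cases t <;> nlinarith [hx.2]
  have hle : (fun x => t + (x ^ 2 - t * x) / L) ≤ᵐ[P] fun x => max t x := by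
    filter_upwards [hae] with x hx
    obtain ⟨hx0, hxL⟩ := hx
    rcases le_total x t with h | h
    · have : (x ^ 2 - t * x) / L ≤ 0 := by
        apply div_nonpos_of_nonpos_of_nonneg _ hL.le
        nlinarith [mul_nonneg hx0 (sub_nonneg.2 h)]
      calc t + (x ^ 2 - t * x) / L ≤ t := by linarith
        _ ≤ max t x := le_max_left _ _
    · have h2 : (x ^ 2 - t * x) / L ≤ x - t := by
        rw [div_le_iff₀ hL]; nlinarith
      calc t + (x ^ 2 - t * x) / L ≤ x := by linarith
        _ ≤ max t x := le_max_right _ _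
  have hintsub : Integrable (fun x : ℝ => x ^ 2 - t * x) P := hint2.sub (hint1.const_mul t)
  have hintg : Integrable (fun x : ℝ => (x ^ 2 - t * x) / L) P := hintsub.div_const L
  have hintf : Integrable (fun x => t + (x ^ 2 - t * x) / L) P :=
    (integrable_const t).add hintg
  have := integral_mono_ae hintf hintmax hle
  have heq : ∫ x, (t + (x ^ 2 - t * x) / L) ∂P = t + (μ ^ 2 + s2 - t * μ) / L := by
    rw [integral_add (integrable_const t) hintg,
      integral_const, probReal_univ, integral_div,
      integral_sub hint2 (hint1.const_mul t), integral_const_mul, hm, hm2, smul_eq_mul, one_mul]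
  rwa [heq] at this


lemma sInf_step (μ s2 L t : ℝ) (hμ : 0 < μ) (hμL : μ < L) (hs2 : 0 ≤ s2)
    (hfeas : s2 ≤ μ * (L - μ)) (hμt : μ ≤ t) (hts : μ * t ≤ μ ^ 2 + s2) (htL : t < L) :
    sInf ((fun P => ∫ x, max t x ∂P) '' ({P | IsProbabilityMeasure P ∧ P (Set.Icc 0 L) = 1 ∧
       (∫ x, x ∂P) = μ ∧ (∫ x, x ^ 2 ∂P) = μ ^ 2 + s2} : Set (Measure ℝ)))
      = t + (μ ^ 2 + s2 - t * μ) / L := by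
  obtain ⟨P0, hP0, hval⟩ := tp_mem μ s2 L t hμ hμL hs2 hfeas hμt hts htL
  have hL : (0:ℝ) < L := lt_trans hμ hμL
  apply le_antisymm
  · exact csInf_le ⟨t + (μ ^ 2 + s2 - t * μ) / L, by
      rintro _ ⟨P, hP, rfl⟩; exact lb_lemma μ s2 L t hμ hL hs2 P hP⟩ ⟨P0, hP0, hval⟩
  · refine le_csInf ⟨_, ⟨P0, hP0, rfl⟩⟩ ?_
    rintro _ ⟨P, hP, rfl⟩
    exact lb_lemma μ s2 L t hμ hL hs2 P hP

lemma sInf_base (μ s2 L : ℝ) (hμ : 0 < μ) (hμL : μ < L) (hs2 : 0 ≤ s2)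
    (hfeas : s2 ≤ μ * (L - μ)) :
    sInf ((fun P => ∫ x, max 0 x ∂P) '' ({P | IsProbabilityMeasure P ∧ P (Set.Icc 0 L) = 1 ∧
       (∫ x, x ∂P) = μ ∧ (∫ x, x ^ 2 ∂P) = μ ^ 2 + s2} : Set (Measure ℝ))) = μ := by
  obtain ⟨P0, hP0, -⟩ := tp_mem μ s2 L μ hμ hμL hs2 hfeas le_rfl (by nlinarith) hμL
  have key : ∀ P ∈ ({P | IsProbabilityMeasure P ∧ P (Set.Icc 0 L) = 1 ∧
       (∫ x, x ∂P) = μ ∧ (∫ x, x ^ 2 ∂P) = μ ^ 2 + s2} : Set (Measure ℝ)),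
      (∫ x, max 0 x ∂P) = μ := by
    rintro P ⟨hprob, hsupp, hm, -⟩
    have hae : ∀ᵐ x ∂P, x ∈ Set.Icc 0 L := by
      have hc : P (Set.Icc 0 L)ᶜ = 0 := by
        rw [measure_compl (measurableSet_Icc (a := (0:ℝ)) (b := L)) (measure_ne_top P _),
          hsupp, measure_univ, tsub_self]
      rw [ae_iff]
      exact hc
    rw [← hm]
    apply integral_congr_ae
    filter_upwards [hae] with x hx
    exact max_eq_right hx.1
  have himg : (fun P => ∫ x, max 0 x ∂P) '' ({P | IsProbabilityMeasure P ∧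
      P (Set.Icc 0 L) = 1 ∧ (∫ x, x ∂P) = μ ∧ (∫ x, x ^ 2 ∂P) = μ ^ 2 + s2} :
      Set (Measure ℝ)) = {μ} := by
    apply Set.eq_singleton_iff_nonempty_unique_mem.2
    exact ⟨⟨_, ⟨P0, hP0, rfl⟩⟩, by rintro _ ⟨P, hP, rfl⟩; exact key P hP⟩
  rw [himg, csInf_singleton]

lemma aux_formula (μ s2 L : ℝ) (hμ : 0 < μ) (hμL : μ < L) (hs2 : 0 ≤ s2)
    (hfeas : s2 ≤ μ * (L - μ)) (n : ℕ) :
    ∀ a : ℕ, robustTAux (fun _ => PmvL μ s2 L) n (a + 1)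
      = μ + s2 / μ * (1 - (1 - μ / L) ^ a) := by
  have hL : (0:ℝ) < L := lt_trans hμ hμL
  have hq0 : 0 < 1 - μ / L := by
    rw [sub_pos, div_lt_one hL]; exact hμL
  have hq1 : 1 - μ / L < 1 := by
    have : 0 < μ / L := div_pos hμ hL
    linarith
  intro a
  induction a with
  | zero =>
    rw [robustTAux, robustTAux]
    simp only [pow_zero, sub_self, mul_zero, add_zero]
    exact sInf_base μ s2 L hμ hμL hs2 hfeas
  | succ a ih =>
    set q := 1 - μ / L with hqdef
    set T := μ + s2 / μ * (1 - q ^ a) with hTdef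
    have hqa : 0 < q ^ a := pow_pos hq0 a
    have hqa1 : q ^ a ≤ 1 := pow_le_one₀ hq0.le hq1.le
    have hμT : μ ≤ T := by
      rw [hTdef]
      have : 0 ≤ s2 / μ * (1 - q ^ a) := mul_nonneg (div_nonneg hs2 hμ.le) (by linarith)
      linarith
    have hts : μ * T ≤ μ ^ 2 + s2 := by
      rw [hTdef]
      have h1 : μ * (s2 / μ) = s2 := mul_div_cancel₀ s2 hμ.ne'
      have h2 : 0 ≤ s2 * q ^ a := mul_nonneg hs2 hqa.le
      nlinarith
    have hTL : T < L := by
      rw [hTdef]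
      have h1 : μ * (s2 / μ) = s2 := mul_div_cancel₀ s2 hμ.ne'
      have h2 : s2 * (1 - q ^ a) ≤ μ * (L - μ) * (1 - q ^ a) :=
        mul_le_mul_of_nonneg_right hfeas (by linarith)
      have h3 : 0 < μ * (L - μ) * q ^ a :=
        mul_pos (mul_pos hμ (by linarith)) hqa
      rw [← sub_pos]
      have h4 : s2 / μ * (1 - q ^ a) = s2 * (1 - q ^ a) / μ := by ring
      rw [h4]
      rw [show L - (μ + s2 * (1 - q ^ a) / μ) = (μ * (L - μ) - s2 * (1 - q ^ a)) / μ by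
        field_simp; ring]
      apply div_pos _ hμ
      nlinarith
    have step : robustTAux (fun _ => PmvL μ s2 L) n (a + 1 + 1)
        = T + (μ ^ 2 + s2 - T * μ) / L := by
      rw [robustTAux, ih]
      exact sInf_step μ s2 L T hμ hμL hs2 hfeas hμT hts hTL
    rw [step, hTdef, hqdef, pow_succ (1 - μ / L) a]
    have hLne : L ≠ 0 := hL.ne'
    have hμne : μ ≠ 0 := hμ.ne'
    field_simp
    ring

theorem stmt5 (n : ℕ) (μ s2 L : ℝ) (hμ : 0 < μ) (hμL : μ < L) (hs2 : 0 ≤ s2)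
    (hfeas : s2 ≤ μ * (L - μ)) :
    (∀ i : ℕ, i + 1 ≤ n →
      robustT (fun _ => PmvL μ s2 L) n i
        = μ + s2 / μ * (1 - (1 - μ / L) ^ (n - 1 - i))) ∧
    robustT (fun _ => PmvL μ s2 L) n n = 0 := by
  constructor
  · intro i hi
    have h1 : n - i = (n - 1 - i) + 1 := by omega
    rw [robustT, h1, aux_formula μ s2 L hμ hμL hs2 hfeas n (n - 1 - i)]
  · rw [robustT, Nat.sub_self, robustTAux]
end

section
/- Let L > 0, μ, σ² ≥ 0, let P ∈ P(μ,σ²,L), and let ξ ∈ [0, L]. Then ∫ min{ξ, x} dP(x) ≤ (μ(L + ξ) − (μ² + σ²))/L. -/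
open MeasureTheory

theorem stmt11 (μ L s2 ξ : ℝ) (hL : 0 < L) (hμ : 0 ≤ μ) (hs2 : 0 ≤ s2)
    (P : Measure ℝ) (hP : P ∈ PmvL μ s2 L) (hξ0 : 0 ≤ ξ) (hξL : ξ ≤ L) :
    (∫ x, min ξ x ∂P) ≤ (μ * (L + ξ) - (μ ^ 2 + s2)) / L := by
  obtain ⟨hprob, hsupp, hmean, hm2⟩ := hP
  have hae : ∀ᵐ x ∂P, x ∈ Set.Icc 0 L := by
    rw [ae_iff]
    have h := prob_compl_eq_one_sub (μ := P) (measurableSet_Icc (a := (0:ℝ)) (b := L))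
    simp only [hsupp, sub_self] at h
    simpa [Set.compl_def] using h
  have haex : ∀ᵐ x ∂P, ‖x‖ ≤ L := by
    filter_upwards [hae] with x hx
    rw [Real.norm_eq_abs, abs_le]
    exact ⟨le_trans (by linarith) hx.1, hx.2⟩
  have hInt1 : Integrable (fun x => x) P :=
    Integrable.mono' (integrable_const L) aestronglyMeasurable_id haex
  have hInt2 : Integrable (fun x => x ^ 2) P := by
    refine Integrable.mono' (integrable_const (L ^ 2)) ?_ ?_
    · exact (aestronglyMeasurable_id.pow 2)
    · filter_upwards [hae] with x hx
      rw [Real.norm_eq_abs, abs_pow]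
      exact pow_le_pow_left₀ (abs_nonneg x) (abs_le.2 ⟨le_trans (by linarith) hx.1, hx.2⟩) 2
  have hIntg : Integrable (fun x => (x * (L + ξ) - x ^ 2) / L) P := by
    exact ((hInt1.mul_const (L + ξ)).sub hInt2).div_const L
  have hIntf : Integrable (fun x => min ξ x) P := by
    refine Integrable.mono' (integrable_const L) ?_ ?_
    · exact aestronglyMeasurable_const.inf aestronglyMeasurable_id
    · filter_upwards [hae] with x hx
      rw [Real.norm_eq_abs, abs_le]
      constructor
      · simp only [le_min_iff]; exact ⟨by linarith, by linarith [hx.1]⟩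
      · exact le_trans (min_le_left _ _) hξL
  have hmono : (∫ x, min ξ x ∂P) ≤ ∫ x, (x * (L + ξ) - x ^ 2) / L ∂P := by
    refine integral_mono_ae hIntf hIntg ?_
    filter_upwards [hae] with x hx
    rw [le_div_iff₀ hL]
    rcases le_total x ξ with h | h
    · rw [min_eq_right h]; nlinarith [hx.1]
    · rw [min_eq_left h]; nlinarith [hx.2]
  calc (∫ x, min ξ x ∂P) ≤ ∫ x, (x * (L + ξ) - x ^ 2) / L ∂P := hmono
    _ = ((∫ x, x ∂P) * (L + ξ) - ∫ x, x ^ 2 ∂P) / L := by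
        rw [integral_div, integral_sub (hInt1.mul_const _) hInt2, integral_mul_const]
    _ = (μ * (L + ξ) - (μ ^ 2 + s2)) / L := by rw [hmean, hm2]
end

section
/- Let 0 < μ < L, σ² ≥ 0 with σ² ≤ μ(L − μ), and let ξ satisfy 0 < ξ < L and μ − σ²/(L − μ) ≤ ξ ≤ μ + σ²/μ. Define p₀ = (Lξ − (L + ξ)μ + μ² + σ²)/(Lξ), p_ξ = (Lμ − μ² − σ²)/((L − ξ)ξ), and p_L = (μ² + σ² − ξμ)/((L − ξ)L). Then p₀, p_ξ, p_L ≥ 0 and p₀ + p_ξ + p_L = 1; the measure P = p₀·δ₀ + p_ξ·δ_ξ + p_L·δ_L belongs to P(μ,σ²,L); and ∫ min{ξ, x} dP(x) = (μ(L + ξ) − (μ² + σ²))/L. -/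
open MeasureTheory

lemma integrable_dirac_aux (f : ℝ → ℝ) (x : ℝ) :
    Integrable f (Measure.dirac x) := by
  refine (integrable_const (f x)).congr ?_
  rw [Filter.EventuallyEq, MeasureTheory.ae_dirac_eq]
  exact Filter.eventually_pure.2 rfl

lemma integral_three (a b c x y z : ℝ) (ha : 0 ≤ a) (hb : 0 ≤ b) (hc : 0 ≤ c)
    (f : ℝ → ℝ) :
    ∫ t, f t ∂((ENNReal.ofReal a • Measure.dirac x + ENNReal.ofReal b • Measure.dirac y)
      + ENNReal.ofReal c • Measure.dirac z) = a * f x + b * f y + c * f z := by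
  have hx : Integrable f (ENNReal.ofReal a • Measure.dirac x) :=
    (integrable_dirac_aux f x).smul_measure ENNReal.ofReal_ne_top
  have hy : Integrable f (ENNReal.ofReal b • Measure.dirac y) :=
    (integrable_dirac_aux f y).smul_measure ENNReal.ofReal_ne_top
  have hz : Integrable f (ENNReal.ofReal c • Measure.dirac z) :=
    (integrable_dirac_aux f z).smul_measure ENNReal.ofReal_ne_top
  rw [integral_add_measure (hx.add_measure hy) hz, integral_add_measure hx hy,
    integral_smul_measure, integral_smul_measure, integral_smul_measure,
    integral_dirac, integral_dirac, integral_dirac,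
    ENNReal.toReal_ofReal ha, ENNReal.toReal_ofReal hb, ENNReal.toReal_ofReal hc]
  simp [smul_eq_mul]

theorem stmt12 (μ L s2 ξ : ℝ) (hμ : 0 < μ) (hμL : μ < L) (hs2 : 0 ≤ s2)
    (hfeas : s2 ≤ μ * (L - μ)) (hξ0 : 0 < ξ) (hξL : ξ < L)
    (hξlo : μ - s2 / (L - μ) ≤ ξ) (hξhi : ξ ≤ μ + s2 / μ)
    (p0 pξ pL : ℝ)
    (hp0 : p0 = (L * ξ - (L + ξ) * μ + μ ^ 2 + s2) / (L * ξ))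
    (hpξ : pξ = (L * μ - μ ^ 2 - s2) / ((L - ξ) * ξ))
    (hpL : pL = (μ ^ 2 + s2 - ξ * μ) / ((L - ξ) * L))
    (P : Measure ℝ)
    (hPdef : P = ENNReal.ofReal p0 • Measure.dirac 0 +
      ENNReal.ofReal pξ • Measure.dirac ξ + ENNReal.ofReal pL • Measure.dirac L) :
    (0 ≤ p0 ∧ 0 ≤ pξ ∧ 0 ≤ pL) ∧ p0 + pξ + pL = 1 ∧
    P ∈ PmvL μ s2 L ∧
    (∫ x, min ξ x ∂P) = (μ * (L + ξ) - (μ ^ 2 + s2)) / L := by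
  have hL : 0 < L := hμ.trans hμL
  have hLξ : 0 < L - ξ := by linarith
  have hLμ : 0 < L - μ := by linarith
  -- nonnegativity
  have h1 : (μ - ξ) * (L - μ) ≤ s2 :=
    (le_div_iff₀ hLμ).1 (by linarith : μ - ξ ≤ s2 / (L - μ))
  have h2 : (ξ - μ) * μ ≤ s2 :=
    (le_div_iff₀ hμ).1 (by linarith : ξ - μ ≤ s2 / μ)
  have hp0n : 0 ≤ p0 := by
    rw [hp0]; apply div_nonneg _ (by positivity); nlinarith
  have hpξn : 0 ≤ pξ := by
    rw [hpξ]; apply div_nonneg _ (by positivity); nlinarith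
  have hpLn : 0 ≤ pL := by
    rw [hpL]; apply div_nonneg _ (by positivity); nlinarith
  have hsum : p0 + pξ + pL = 1 := by
    rw [hp0, hpξ, hpL]
    field_simp
    ring
  have hI : ∀ f : ℝ → ℝ, (∫ x, f x ∂P) = p0 * f 0 + pξ * f ξ + pL * f L := by
    intro f
    rw [hPdef]
    exact integral_three p0 pξ pL 0 ξ L hp0n hpξn hpLn f
  have hmeasI : ∀ s : Set ℝ, MeasurableSet s → (0:ℝ) ∈ s → ξ ∈ s → L ∈ s →
      P s = 1 := by
    intro s hs h0 hξs hLs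
    rw [hPdef]
    simp only [Measure.add_apply, Measure.smul_apply, Measure.dirac_apply' _ hs,
      Set.indicator_of_mem h0, Set.indicator_of_mem hξs, Set.indicator_of_mem hLs,
      Pi.one_apply, smul_eq_mul, mul_one]
    rw [← ENNReal.ofReal_add hp0n hpξn, ← ENNReal.ofReal_add (by linarith) hpLn, hsum]
    simp
  refine ⟨⟨hp0n, hpξn, hpLn⟩, hsum, ⟨?_, ?_, ?_, ?_⟩, ?_⟩
  · constructor
    exact hmeasI _ MeasurableSet.univ trivial trivial trivial
  · exact hmeasI _ measurableSet_Icc ⟨le_refl 0, hL.le⟩ ⟨hξ0.le, hξL.le⟩ ⟨hL.le, le_refl L⟩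
  · rw [hI (fun x => x), hp0, hpξ, hpL]
    field_simp
    ring
  · rw [hI (fun x => x ^ 2), hp0, hpξ, hpL]
    field_simp
    ring
  · rw [hI (fun x => min ξ x)]
    rw [min_eq_right hξ0.le, min_eq_left (le_refl ξ), min_eq_left hξL.le,
      hp0, hpξ, hpL]
    field_simp
    ring
end

section
/- Let μ > 0 and 0 ≤ d < 2μ, and suppose 2μ²/(2μ − d) ≤ L. Then the two-point measure P = (d/(2μ))·δ₀ + (1 − d/(2μ))·δ_{2μ²/(2μ−d)} belongs to P(μ,d,L), and for every ξ with μ ≤ ξ ≤ 2μ²/(2μ − d) one has ∫ min{ξ, x} dP(x) = ξ·(1 − d/(2μ)). -/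
open MeasureTheory

/-- `P(μ,d,L)`: Borel probability measures supported in `[0,L]` with mean `μ`
and mean absolute deviation `d`. -/
def PmdL (μ d L : ℝ) : Set (Measure ℝ) :=
  {P | IsProbabilityMeasure P ∧ P (Set.Icc 0 L) = 1 ∧
       (∫ x, x ∂P) = μ ∧ (∫ x, |x - μ| ∂P) = d}

lemma myIntDirac {f : ℝ → ℝ} (hf : Measurable f) (x : ℝ) :
    Integrable f (Measure.dirac x) := by
  refine ⟨hf.aestronglyMeasurable, ?_⟩
  rw [HasFiniteIntegral, lintegral_dirac]
  exact ENNReal.coe_lt_top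

lemma twoPoint_s14 {f : ℝ → ℝ} (hf : Measurable f) {c₁ c₂ : ℝ} (hc₁ : 0 ≤ c₁) (hc₂ : 0 ≤ c₂)
    (x₁ x₂ : ℝ) :
    (∫ x, f x ∂(ENNReal.ofReal c₁ • Measure.dirac x₁ + ENNReal.ofReal c₂ • Measure.dirac x₂))
      = c₁ * f x₁ + c₂ * f x₂ := by
  rw [integral_add_measure ((myIntDirac hf x₁).smul_measure ENNReal.ofReal_ne_top)
    ((myIntDirac hf x₂).smul_measure ENNReal.ofReal_ne_top),
    integral_smul_measure, integral_smul_measure, integral_dirac, integral_dirac,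
    ENNReal.toReal_ofReal hc₁, ENNReal.toReal_ofReal hc₂]
  simp [smul_eq_mul]

theorem stmt14 (μ d L : ℝ) (hμ : 0 < μ) (hd0 : 0 ≤ d) (hd : d < 2 * μ)
    (hL : 2 * μ ^ 2 / (2 * μ - d) ≤ L)
    (P : Measure ℝ)
    (hPdef : P = ENNReal.ofReal (d / (2 * μ)) • Measure.dirac 0 +
      ENNReal.ofReal (1 - d / (2 * μ)) • Measure.dirac (2 * μ ^ 2 / (2 * μ - d))) :
    P ∈ PmdL μ d L ∧
    ∀ ξ : ℝ, μ ≤ ξ → ξ ≤ 2 * μ ^ 2 / (2 * μ - d) →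
      (∫ x, min ξ x ∂P) = ξ * (1 - d / (2 * μ)) := by
  have h2μ : (0:ℝ) < 2 * μ := by linarith
  have hden : (0:ℝ) < 2 * μ - d := by linarith
  have hs_pos : 0 < 2 * μ ^ 2 / (2 * μ - d) := by positivity
  have hsμ : μ ≤ 2 * μ ^ 2 / (2 * μ - d) := by
    rw [le_div_iff₀ hden]; nlinarith
  have ha0 : 0 ≤ d / (2 * μ) := by positivity
  have ha1 : d / (2 * μ) ≤ 1 := by rw [div_le_one h2μ]; linarith
  have hb0 : 0 ≤ 1 - d / (2 * μ) := by linarith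
  have hL0 : (0:ℝ) ≤ L := le_trans hs_pos.le hL
  subst hPdef
  refine ⟨⟨⟨?_⟩, ?_, ?_, ?_⟩, ?_⟩
  · simp only [Measure.coe_add, Measure.coe_smul, Pi.add_apply, Pi.smul_apply,
      measure_univ, smul_eq_mul, mul_one]
    rw [← ENNReal.ofReal_add ha0 hb0]
    norm_num
  · have h1 : (0:ℝ) ∈ Set.Icc (0:ℝ) L := by constructor <;> linarith
    have h2 : 2 * μ ^ 2 / (2 * μ - d) ∈ Set.Icc (0:ℝ) L := ⟨hs_pos.le, hL⟩
    simp only [Measure.coe_add, Measure.coe_smul, Pi.add_apply, Pi.smul_apply,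
      Measure.dirac_apply_of_mem h1, Measure.dirac_apply_of_mem h2, smul_eq_mul, mul_one]
    rw [← ENNReal.ofReal_add ha0 hb0]
    norm_num
  · rw [twoPoint_s14 (f := fun x => x) measurable_id ha0 hb0]
    
    field_simp
    ring
  · rw [twoPoint_s14 (by fun_prop) ha0 hb0]
    rw [show |(0:ℝ) - μ| = μ by rw [abs_of_nonpos (by linarith)]; ring,
      abs_of_nonneg (by linarith)]
    field_simp
    ring
  · intro ξ hξ1 hξ2
    rw [twoPoint_s14 (f := fun x => min ξ x) (measurable_const.min measurable_id) ha0 hb0,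
      min_eq_right (by linarith : (0:ℝ) ≤ ξ), min_eq_left hξ2]
    ring
end

section
/- Let μ > 0 and σ² > 0. Then the infimum, over all Borel probability measures P supported in [0,∞) with mean ∫ x dP = μ and second moment ∫ x² dP = μ² + σ², of ∫ max{μ, x} dP(x) equals μ, and this infimum is not attained by any such measure. -/
open MeasureTheory

lemma myIntDirac_s17 (f : ℝ → ℝ) (a : ℝ) : Integrable f (Measure.dirac a) :=
  (integrable_const (f a)).congr (ae_eq_dirac f).symm

lemma myIntTwoPoint (c d : ℝ) (hc : 0 ≤ c) (hd : 0 ≤ d) (a b : ℝ) (f : ℝ → ℝ) :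
    ∫ x, f x ∂((ENNReal.ofReal c) • Measure.dirac a + (ENNReal.ofReal d) • Measure.dirac b)
      = c * f a + d * f b := by
  rw [integral_add_measure ((myIntDirac_s17 f a).smul_measure ENNReal.ofReal_ne_top)
        ((myIntDirac_s17 f b).smul_measure ENNReal.ofReal_ne_top),
      integral_smul_measure, integral_smul_measure, integral_dirac, integral_dirac,
      ENNReal.toReal_ofReal hc, ENNReal.toReal_ofReal hd]
  simp [smul_eq_mul]

lemma myIntTwoPoint' (c d : ℝ) (hc : 0 ≤ c) (hd : 0 ≤ d) (a b : ℝ) (f : ℝ → ℝ) :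
    Integrable f ((ENNReal.ofReal c) • Measure.dirac a + (ENNReal.ofReal d) • Measure.dirac b) :=
  ((myIntDirac_s17 f a).smul_measure ENNReal.ofReal_ne_top).add_measure
    ((myIntDirac_s17 f b).smul_measure ENNReal.ofReal_ne_top)

lemma myMaxInt (μ : ℝ) (P : Measure ℝ) [IsProbabilityMeasure P]
    (h3 : Integrable (fun x : ℝ => x) P) : Integrable (fun x : ℝ => max μ x) P := by
  exact (integrable_const μ).sup h3

lemma myLB (μ : ℝ) (P : Measure ℝ) (h1 : IsProbabilityMeasure P)
    (h3 : Integrable (fun x : ℝ => x) P) : μ ≤ ∫ x, max μ x ∂P := by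
  have : (∫ _, μ ∂P) ≤ ∫ x, max μ x ∂P :=
    integral_mono (integrable_const μ) (myMaxInt μ P h3) (fun x => le_max_left _ _)
  simpa using this

theorem stmt17 (μ s2 : ℝ) (hμ : 0 < μ) (hs2 : 0 < s2) :
    sInf {v : ℝ | ∃ P : Measure ℝ, IsProbabilityMeasure P ∧ P (Set.Ici 0) = 1 ∧
        Integrable (fun x : ℝ => x) P ∧ Integrable (fun x : ℝ => x ^ 2) P ∧
        (∫ x, x ∂P) = μ ∧ (∫ x, x ^ 2 ∂P) = μ ^ 2 + s2 ∧
        v = ∫ x, max μ x ∂P} = μ ∧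
    ∀ P : Measure ℝ, IsProbabilityMeasure P → P (Set.Ici 0) = 1 →
      Integrable (fun x : ℝ => x) P → Integrable (fun x : ℝ => x ^ 2) P →
      (∫ x, x ∂P) = μ → (∫ x, x ^ 2 ∂P) = μ ^ 2 + s2 →
      (∫ x, max μ x ∂P) ≠ μ := by
  set S := {v : ℝ | ∃ P : Measure ℝ, IsProbabilityMeasure P ∧ P (Set.Ici 0) = 1 ∧
        Integrable (fun x : ℝ => x) P ∧ Integrable (fun x : ℝ => x ^ 2) P ∧
        (∫ x, x ∂P) = μ ∧ (∫ x, x ^ 2 ∂P) = μ ^ 2 + s2 ∧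
        v = ∫ x, max μ x ∂P} with hS
  -- Construction of elements of S
  have construct : ∀ ε > 0, ∃ v ∈ S, v ≤ μ + ε := by
    intro ε hε
    set t : ℝ := max (s2 / μ) (s2 / ε) with ht
    have ht0 : 0 < t := lt_max_of_lt_left (div_pos hs2 hμ)
    set p : ℝ := s2 / (s2 + t ^ 2) with hp
    have hden : 0 < s2 + t ^ 2 := by positivity
    have hp0 : 0 < p := div_pos hs2 hden
    have hp1 : p < 1 := by
      rw [hp, div_lt_one hden]; nlinarith
    set a : ℝ := μ - s2 / t with ha
    set b : ℝ := μ + t with hb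
    have ha0 : 0 ≤ a := by
      rw [ha]
      have h1 : s2 / μ ≤ t := le_max_left _ _
      have : s2 / t ≤ μ := by
        rw [div_le_iff₀ ht0]
        rw [div_le_iff₀ hμ] at h1
        nlinarith
      linarith
    have haμ : a ≤ μ := by
      rw [ha]
      have : 0 ≤ s2 / t := by positivity
      linarith
    have hbμ : μ ≤ b := by rw [hb]; linarith
    set P : Measure ℝ := (ENNReal.ofReal (1 - p)) • Measure.dirac a
        + (ENNReal.ofReal p) • Measure.dirac b with hP
    have h1p : (0:ℝ) ≤ 1 - p := by linarith
    have hPprob : IsProbabilityMeasure P := by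
      constructor
      rw [hP]
      simp only [Measure.add_apply, Measure.smul_apply, smul_eq_mul,
        Measure.dirac_apply_of_mem (Set.mem_univ a), Measure.dirac_apply_of_mem (Set.mem_univ b),
        mul_one]
      rw [← ENNReal.ofReal_add h1p hp0.le]
      norm_num
    have hPIci : P (Set.Ici 0) = 1 := by
      rw [hP]
      have haIci : a ∈ Set.Ici (0:ℝ) := ha0
      have hbIci : b ∈ Set.Ici (0:ℝ) := by
        simp only [Set.mem_Ici]; positivity
      simp only [Measure.add_apply, Measure.smul_apply, smul_eq_mul,
        Measure.dirac_apply_of_mem haIci, Measure.dirac_apply_of_mem hbIci, mul_one]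
      rw [← ENNReal.ofReal_add h1p hp0.le]
      norm_num
    have ht2 : t ≠ 0 := ne_of_gt ht0
    have hden' : s2 + t ^ 2 ≠ 0 := ne_of_gt hden
    refine ⟨μ + s2 * t / (s2 + t ^ 2), ⟨P, hPprob, hPIci,
      myIntTwoPoint' _ _ h1p hp0.le a b _, myIntTwoPoint' _ _ h1p hp0.le a b _, ?_, ?_, ?_⟩, ?_⟩
    · rw [hP, myIntTwoPoint _ _ h1p hp0.le]
      rw [ha, hb, hp]
      field_simp
      ring
    · rw [hP, myIntTwoPoint _ _ h1p hp0.le]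
      rw [ha, hb, hp]
      field_simp
      ring
    · rw [hP, myIntTwoPoint _ _ h1p hp0.le]
      rw [max_eq_left haμ, max_eq_right hbμ]
      rw [hb, hp]
      field_simp
      ring
    · have h1 : s2 / ε ≤ t := le_max_right _ _
      have h2 : s2 * t / (s2 + t ^ 2) ≤ s2 / t := by
        rw [div_le_div_iff₀ hden ht0]
        nlinarith
      have h3 : s2 / t ≤ ε := by
        rw [div_le_iff₀ ht0]
        rw [div_le_iff₀ hε] at h1
        nlinarith
      linarith
  have hbdd : BddBelow S := by
    refine ⟨μ, fun v hv => ?_⟩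
    obtain ⟨P, h1, h2, h3, h4, h5, h6, h7⟩ := hv
    rw [h7]
    exact myLB μ P h1 h3
  have hne : S.Nonempty := by
    obtain ⟨v, hv, _⟩ := construct 1 one_pos
    exact ⟨v, hv⟩
  constructor
  · apply le_antisymm
    · apply le_of_forall_pos_le_add
      intro ε hε
      obtain ⟨v, hvS, hv⟩ := construct ε hε
      exact (csInf_le hbdd hvS).trans hv
    · apply le_csInf hne
      intro v hv
      obtain ⟨P, h1, h2, h3, h4, h5, h6, h7⟩ := hv
      rw [h7]
      exact myLB μ P h1 h3
  · intro P h1 h2 h3 h4 h5 h6 heq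
    haveI := h1
    have hmaxint : Integrable (fun x : ℝ => max μ x) P := myMaxInt μ P h3
    -- ∫ (max μ x - μ) = 0
    have h0 : ∫ x, (max μ x - μ) ∂P = 0 := by
      rw [integral_sub hmaxint (integrable_const μ), heq]
      simp
    have hae : (fun x : ℝ => max μ x - μ) =ᵐ[P] 0 :=
      (integral_eq_zero_iff_of_nonneg (fun x => sub_nonneg.2 (le_max_left _ _))
        (hmaxint.sub (integrable_const μ))).1 h0
    have hle : ∀ᵐ x ∂P, x ≤ μ := by
      filter_upwards [hae] with x hx
      have : max μ x = μ := by
        have := sub_eq_zero.1 hx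
        simpa using this
      calc x ≤ max μ x := le_max_right _ _
        _ = μ := this
    -- ∫ (μ - x) = 0 and μ - x ≥ 0 a.e.
    have h0' : ∫ x, (μ - x) ∂P = 0 := by
      rw [integral_sub (integrable_const μ) h3, h5]
      simp
    have hae' : (fun x : ℝ => μ - x) =ᵐ[P] 0 :=
      (integral_eq_zero_iff_of_nonneg_ae
        (by filter_upwards [hle] with x hx; simpa using sub_nonneg.2 hx)
        ((integrable_const μ).sub h3)).1 h0'
    have heqx : (fun x : ℝ => x ^ 2) =ᵐ[P] (fun _ => μ ^ 2) := by
      filter_upwards [hae'] with x hx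
      have : x = μ := by
        have := sub_eq_zero.1 hx
        linarith
      rw [this]
    have : ∫ x, x ^ 2 ∂P = μ ^ 2 := by
      rw [integral_congr_ae heqx]
      simp
    rw [h6] at this
    linarith
end

section
/- Let μ > 0, L > 0 and σ² ≥ 0 with σ² ≤ μ(L − μ). Let P = p·δ_a + (1−p)·δ_b be any two-point distribution in P₂(μ,σ²,L). Then b ≥ μ + σ²/μ and 1 − p ≥ σ²/((L − μ)² + σ²). -/
open MeasureTheory

theorem stmt18 (μ L s2 a b p : ℝ) (hμ : 0 < μ) (hL : 0 < L) (hs2 : 0 ≤ s2)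
    (hfeas : s2 ≤ μ * (L - μ)) (ha : 0 ≤ a) (hab : a ≤ b) (hbL : b ≤ L)
    (hp0 : 0 ≤ p) (hp1 : p ≤ 1)
    (hmean : p * a + (1 - p) * b = μ)
    (hm2 : p * a ^ 2 + (1 - p) * b ^ 2 = μ ^ 2 + s2) :
    μ + s2 / μ ≤ b ∧ s2 / ((L - μ) ^ 2 + s2) ≤ 1 - p := by
  have hkey : (μ - a) * (b - μ) = s2 := by linear_combination hm2 - (a + b) * hmean
  have hbμ : μ ≤ b := by nlinarith [hkey, hs2]
  have h1 : p * (μ - a) = (1 - p) * (b - μ) := by linear_combination -hmean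
  have h2 : p * s2 = (1 - p) * (b - μ) ^ 2 := by linear_combination (b - μ) * h1 - p * hkey
  constructor
  · have hd : s2 / μ ≤ b - μ := by
      rw [div_le_iff₀ hμ]
      nlinarith [hkey, sub_nonneg.2 hbμ]
    linarith
  · rcases eq_or_lt_of_le hs2 with h | h
    · rw [← h]
      simp
      linarith
    · have hD : 0 < (L - μ) ^ 2 + s2 := by positivity
      rw [div_le_iff₀ hD]
      have hLb : 0 ≤ L - b := sub_nonneg.2 hbL
      have hLbμ : 0 ≤ L + b - 2 * μ := by linarith [hbμ.trans hbL]
      nlinarith [h2, mul_nonneg (sub_nonneg.2 hp1) (mul_nonneg hLb hLbμ)]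
end

section
/- Let μ > 0, L > 0 and σ² > 0 with σ² ≤ μ(L − μ), and let n ∈ ℕ. Let X₁, …, Xₙ be independent random variables such that each Xᵢ is distributed according to some (possibly different) distribution in P₂(μ,σ²,L). Then the probability that at least one of X₁, …, Xₙ is at least μ + σ²/μ satisfies ℙ(∃ i ∈ {1,…,n} : Xᵢ ≥ μ + σ²/μ) ≥ 1 − ((L − μ)²/((L − μ)² + σ²))^n. -/
open MeasureTheory

open ProbabilityTheory

lemma keyalg (μ L s2 p a b : ℝ) (hμ : 0 < μ) (hs2 : 0 < s2)
    (h0a : 0 ≤ a) (hab : a ≤ b) (hbL : b ≤ L) (hp0 : 0 ≤ p) (hp1 : p ≤ 1)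
    (hmean : p * a + (1 - p) * b = μ) (hsec : p * a ^ 2 + (1 - p) * b ^ 2 = μ ^ 2 + s2) :
    μ + s2 / μ ≤ b ∧ s2 / ((L - μ) ^ 2 + s2) ≤ 1 - p := by
  have hvar : p * (1 - p) * (b - a) ^ 2 = s2 := by nlinarith [sq_nonneg (a - b)]
  have hq : 0 < 1 - p := by nlinarith [sq_nonneg (b - a), mul_nonneg hp0 (sq_nonneg (b-a))]
  have hpp : 0 < p := by nlinarith [sq_nonneg (b - a), mul_nonneg (sub_nonneg.2 hp1) (sq_nonneg (b-a))]
  have hba : a < b := hab.lt_of_ne (fun h => by subst h; nlinarith)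
  have hbmu : b - μ = p * (b - a) := by linarith [hmean]
  constructor
  · have e1 : μ * (b - μ) - s2 = p * (b - a) * a := by rw [← hvar, ← hmean]; ring
    have h1 : s2 ≤ μ * (b - μ) := by nlinarith [mul_nonneg (mul_nonneg hpp.le (by linarith : (0:ℝ) ≤ b - a)) h0a]
    have h2 : s2 / μ ≤ b - μ := by rw [div_le_iff₀ hμ]; nlinarith
    linarith
  · have hD : 0 < (L - μ) ^ 2 + s2 := by positivity
    rw [div_le_iff₀ hD]
    have e2 : (1 - p) * ((L - μ) ^ 2 + s2) - s2 = (1 - p) * ((L - μ) ^ 2 - (p * (b - a)) ^ 2) := by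
      rw [← hvar]; ring
    have hbμ : 0 ≤ p * (b - a) := mul_nonneg hpp.le (by linarith)
    have hLb : p * (b - a) ≤ L - μ := by rw [← hbmu]; linarith
    nlinarith [mul_nonneg hq.le (sub_nonneg.2 (pow_le_pow_left₀ hbμ hLb 2))]

theorem stmt19 (μ L s2 : ℝ) (hμ : 0 < μ) (hL : 0 < L) (hs2 : 0 < s2)
    (hfeas : s2 ≤ μ * (L - μ)) (n : ℕ)
    {Ω : Type*} [MeasurableSpace Ω] (Pr : Measure Ω) [IsProbabilityMeasure Pr]
    (X : Fin n → Ω → ℝ) (hmeas : ∀ i, Measurable (X i))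
    (hindep : iIndepFun X Pr)
    (hdist : ∀ i, Pr.map (X i) ∈ P2set μ s2 L) :
    ENNReal.ofReal (1 - ((L - μ) ^ 2 / ((L - μ) ^ 2 + s2)) ^ n) ≤
      Pr {ω | ∃ i : Fin n, μ + s2 / μ ≤ X i ω} := by
  set t := μ + s2 / μ with ht
  have hLμ : 0 < L - μ := by nlinarith
  have hD : 0 < (L - μ) ^ 2 + s2 := by positivity
  set r := (L - μ) ^ 2 / ((L - μ) ^ 2 + s2) with hr
  have hr0 : 0 ≤ r := by positivity
  have hr1 : r ≤ 1 := by rw [hr, div_le_one hD]; nlinarith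
  -- per-coordinate bound
  have hbound : ∀ i, Pr (X i ⁻¹' Set.Iio t) ≤ ENNReal.ofReal r := by
    intro i
    obtain ⟨p, a, b, h0a, hab, hbL, hp0, hp1, hmean, hsec, hP⟩ := hdist i
    obtain ⟨hb, hp⟩ := keyalg μ L s2 p a b hμ hs2 h0a hab hbL hp0 hp1 hmean hsec
    have hmap : Pr (X i ⁻¹' Set.Iio t) = twoPoint p a b (Set.Iio t) := by
      rw [← hP, Measure.map_apply (hmeas i) measurableSet_Iio]
    rw [hmap, twoPoint]
    have hdb : Measure.dirac b (Set.Iio t) = 0 := by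
      rw [Measure.dirac_apply' _ measurableSet_Iio,
        Set.indicator_of_notMem (by simpa using not_lt.2 hb)]
    have hda : Measure.dirac a (Set.Iio t) ≤ 1 := by
      simpa using measure_mono (Set.subset_univ (Set.Iio t)) (μ := Measure.dirac a)
    calc (ENNReal.ofReal p • Measure.dirac a + ENNReal.ofReal (1 - p) • Measure.dirac b)
          (Set.Iio t)
        = ENNReal.ofReal p * Measure.dirac a (Set.Iio t)
          + ENNReal.ofReal (1 - p) * Measure.dirac b (Set.Iio t) := by
          simp [Measure.add_apply, Measure.smul_apply, smul_eq_mul]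
      _ ≤ ENNReal.ofReal p * 1 + ENNReal.ofReal (1 - p) * 0 := by
          gcongr <;> simp [hdb]
      _ = ENNReal.ofReal p := by simp
      _ ≤ ENNReal.ofReal r := by
          apply ENNReal.ofReal_le_ofReal
          have : 1 - r = s2 / ((L - μ) ^ 2 + s2) := by
            rw [hr]; field_simp; ring
          linarith [hp, this]
  -- the complement
  have hSmeas : MeasurableSet {ω | ∃ i : Fin n, t ≤ X i ω} := by
    have : {ω | ∃ i : Fin n, t ≤ X i ω} = ⋃ i, X i ⁻¹' Set.Ici t := by
      ext ω; simp [Set.mem_iUnion]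
    rw [this]
    exact MeasurableSet.iUnion fun i => (hmeas i) measurableSet_Ici
  have hcompl : {ω | ∃ i : Fin n, t ≤ X i ω}ᶜ = ⋂ i ∈ Finset.univ, X i ⁻¹' Set.Iio t := by
    ext ω; simp [not_le]
  have hprod : Pr {ω | ∃ i : Fin n, t ≤ X i ω}ᶜ = ∏ i : Fin n, Pr (X i ⁻¹' Set.Iio t) := by
    rw [hcompl]
    exact hindep.measure_inter_preimage_eq_mul Finset.univ
      (fun i _ => measurableSet_Iio)
  have hcb : Pr {ω | ∃ i : Fin n, t ≤ X i ω}ᶜ ≤ ENNReal.ofReal (r ^ n) := by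
    rw [hprod, ENNReal.ofReal_pow hr0]
    calc ∏ i : Fin n, Pr (X i ⁻¹' Set.Iio t)
        ≤ ∏ _i : Fin n, ENNReal.ofReal r := Finset.prod_le_prod' fun i _ => hbound i
      _ = ENNReal.ofReal r ^ n := by simp
  have hrn : r ^ n ≤ 1 := pow_le_one₀ hr0 hr1
  have hps : Pr {ω | ∃ i : Fin n, t ≤ X i ω} = 1 - Pr {ω | ∃ i : Fin n, t ≤ X i ω}ᶜ := by
    rw [prob_compl_eq_one_sub hSmeas,
      ENNReal.sub_sub_cancel ENNReal.one_ne_top prob_le_one]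
  rw [hps, ENNReal.ofReal_sub _ (by positivity), ENNReal.ofReal_one]
  exact tsub_le_tsub_left hcb 1
end
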